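/- arXiv:1007.0569 — 7 statements merged into one kernel-verified Lean document; each statement's English description precedes it below -/
import Mathlib

section
/- For every ℓ > 1, the sum over all multi-indices α of (2ℕ)^{−ℓα} := ∏_{k≥1} (2k)^{−ℓ α_k} is finite. -/
open scoped BigOperators

noncomputable section

abbrev MultiIndex := ℕ →₀ ℕ

/-- `r^α = ∏ₖ r_k^{α_k}` -/
def mpow (r : ℕ → ℝ) (α : MultiIndex) : ℝ := ∏ k ∈ α.support, r k ^ α k

/-- `α! = ∏ₖ α_k!` -/
def mfact (α : MultiIndex) : ℕ := ∏ k ∈ α.support, (α k).factorial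

/-- generalized binomial coefficient `C(α,β) = ∏ₖ C(α_k, β_k)` -/
def mchoose (α β : MultiIndex) : ℕ :=
  ∏ k ∈ α.support ∪ β.support, Nat.choose (α k) (β k)

/-- `|α| = ∑ₖ α_k` -/
def mdeg (α : MultiIndex) : ℕ := ∑ k ∈ α.support, α k

/-- summability of (2N)^(-l*alpha) over multi-indices, l > 1;
the k-th variable (k = 0,1,...) corresponds to the factor (2(k+1))^(-l*alpha_k). -/
theorem stmt2 (ℓ : ℝ) (hℓ : 1 < ℓ) :
    Summable (fun α : MultiIndex =>
      ∏ k ∈ α.support, ((2 * ((k : ℝ) + 1)) ^ (-(ℓ * (α k : ℝ))) : ℝ)) := by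
  classical
  set x : ℕ → ℝ := fun k => (2 * ((k : ℝ) + 1)) ^ (-ℓ) with hxdef
  have hb : ∀ k : ℕ, (0:ℝ) < 2 * ((k : ℝ) + 1) := by intro k; positivity
  have hx0 : ∀ k, 0 ≤ x k := fun k => Real.rpow_nonneg (hb k).le _
  have hxhalf : ∀ k, x k ≤ 1 / 2 := by
    intro k
    have h1 : x k ≤ (2:ℝ) ^ (-ℓ) := by
      apply Real.rpow_le_rpow_of_nonpos two_pos _ (by linarith)
      nlinarith [Nat.cast_nonneg (α := ℝ) k]
    have h2 : (2:ℝ) ^ (-ℓ) ≤ (2:ℝ) ^ (-(1:ℝ)) :=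
      Real.rpow_le_rpow_of_exponent_le one_le_two (by linarith)
    have h3 : (2:ℝ) ^ (-(1:ℝ)) = 1 / 2 := by
      rw [Real.rpow_neg (by norm_num), Real.rpow_one]; norm_num
    exact h1.trans (h2.trans_eq h3)
  have hx1 : ∀ k, x k < 1 := fun k => lt_of_le_of_lt (hxhalf k) (by norm_num)
  -- summability of x
  have hxsum : Summable x := by
    have h1 : Summable (fun n : ℕ => ((n : ℝ) + 1) ^ (-ℓ)) := by
      have := Real.summable_nat_rpow.mpr (show -ℓ < -1 by linarith)
      have := (summable_nat_add_iff 1).mpr this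
      simpa using this
    refine Summable.of_nonneg_of_le hx0 (fun k => ?_) h1
    apply Real.rpow_le_rpow_of_nonpos (by positivity) (by nlinarith [Nat.cast_nonneg (α := ℝ) k]) (by linarith)
  set T : ℝ := ∑' k, x k with hT
  -- pointwise rewriting
  have hterm : ∀ (k m : ℕ), (2 * ((k : ℝ) + 1)) ^ (-(ℓ * (m : ℝ))) = x k ^ m := by
    intro k m
    rw [hxdef, ← Real.rpow_natCast ((2 * ((k : ℝ) + 1)) ^ (-ℓ)) m,
      ← Real.rpow_mul (hb k).le, neg_mul]
  -- inverse bound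
  have hinv : ∀ k, (1 - x k)⁻¹ ≤ Real.exp (2 * x k) := by
    intro k
    have h1x : (0:ℝ) < 1 - x k := by linarith [hx1 k]
    have he : 2 * x k + 1 ≤ Real.exp (2 * x k) := Real.add_one_le_exp _
    rw [inv_eq_one_div, div_le_iff₀ h1x]
    nlinarith [hx0 k, hxhalf k]
  apply summable_of_sum_le (c := Real.exp (2 * T))
  · intro α
    exact Finset.prod_nonneg fun k _ => Real.rpow_nonneg (hb k).le _
  intro u
  -- choose bounds N, M
  set N : ℕ := (u.sup fun α => α.support.sup id) + 1 with hN
  set M : ℕ := u.sup fun α => α.support.sup α with hM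
  have hsupp : ∀ α ∈ u, α.support ⊆ Finset.range N := by
    intro α hα k hk
    rw [Finset.mem_range, hN, Nat.lt_succ_iff]
    exact le_trans (Finset.le_sup (f := id) hk) (Finset.le_sup (f := fun α : MultiIndex => α.support.sup id) hα)
  have hval : ∀ α ∈ u, ∀ k, α k < M + 1 := by
    intro α hα k
    rw [Nat.lt_succ_iff]
    by_cases hk : k ∈ α.support
    · exact le_trans (Finset.le_sup (f := ⇑α) hk) (Finset.le_sup (f := fun α : MultiIndex => α.support.sup ⇑α) hα)
    · simp [Finsupp.notMem_support_iff.mp hk]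
  -- rewrite each term as product over range N
  have hterm2 : ∀ α ∈ u,
      (∏ k ∈ α.support, (2 * ((k : ℝ) + 1)) ^ (-(ℓ * (α k : ℝ))))
        = ∏ k ∈ Finset.range N, x k ^ α k := by
    intro α hα
    rw [show (∏ k ∈ α.support, (2 * ((k : ℝ) + 1)) ^ (-(ℓ * (α k : ℝ))))
        = ∏ k ∈ α.support, x k ^ α k from
      Finset.prod_congr rfl fun k _ => hterm k (α k)]
    exact Finset.prod_subset (hsupp α hα) (fun k _ hk => by
      simp [Finsupp.notMem_support_iff.mp hk])
  calc ∑ α ∈ u, ∏ k ∈ α.support, (2 * ((k : ℝ) + 1)) ^ (-(ℓ * (α k : ℝ)))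
      = ∑ α ∈ u, ∏ k ∈ Finset.range N, x k ^ α k := Finset.sum_congr rfl hterm2
    _ ≤ ∏ k ∈ Finset.range N, ∑ m ∈ Finset.range (M + 1), x k ^ m := by
        rw [Finset.prod_sum]
        -- sum over u ≤ sum over pi
        set e : MultiIndex → (∀ a ∈ Finset.range N, ℕ) := fun α k _ => α k with he
        have hinj : Set.InjOn e u := by
          intro α hα β hβ hαβ
          ext k
          by_cases hk : k < N
          · exact congrFun (congrFun hαβ k) (Finset.mem_range.mpr hk)
          · have h1 : k ∉ α.support := fun h => hk (Finset.mem_range.mp (hsupp α hα h))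
            have h2 : k ∉ β.support := fun h => hk (Finset.mem_range.mp (hsupp β hβ h))
            rw [Finsupp.notMem_support_iff.mp h1, Finsupp.notMem_support_iff.mp h2]
        have hmem : ∀ α ∈ u, e α ∈ (Finset.range N).pi fun _ => Finset.range (M + 1) := by
          intro α hα
          rw [Finset.mem_pi]
          intro k _
          exact Finset.mem_range.mpr (hval α hα k)
        have := Finset.sum_image (f := fun p : (∀ a ∈ Finset.range N, ℕ) =>
            ∏ k ∈ (Finset.range N).attach, x k.1 ^ p k.1 k.2) (g := e) (s := u)
            (fun α hα β hβ => hinj hα hβ)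
        calc ∑ α ∈ u, ∏ k ∈ Finset.range N, x k ^ α k
            = ∑ p ∈ u.image e, ∏ k ∈ (Finset.range N).attach, x k.1 ^ p k.1 k.2 := by
              rw [this]
              exact Finset.sum_congr rfl fun α _ => (Finset.prod_attach _ _).symm
          _ ≤ ∑ p ∈ (Finset.range N).pi fun _ => Finset.range (M + 1),
                ∏ k ∈ (Finset.range N).attach, x k.1 ^ p k.1 k.2 := by
              apply Finset.sum_le_sum_of_subset_of_nonneg
              · intro p hp
                obtain ⟨α, hα, rfl⟩ := Finset.mem_image.mp hp
                exact hmem α hα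
              · intro p _ _
                exact Finset.prod_nonneg fun k _ => pow_nonneg (hx0 k.1) _
    _ ≤ ∏ k ∈ Finset.range N, (1 - x k)⁻¹ := by
        apply Finset.prod_le_prod
        · intro k _
          exact Finset.sum_nonneg fun m _ => pow_nonneg (hx0 k) m
        · intro k _
          have hs : Summable (fun m : ℕ => x k ^ m) :=
            summable_geometric_of_lt_one (hx0 k) (hx1 k)
          calc ∑ m ∈ Finset.range (M + 1), x k ^ m
              ≤ ∑' m : ℕ, x k ^ m := Summable.sum_le_tsum _ (fun m _ => pow_nonneg (hx0 k) m) hs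
            _ = (1 - x k)⁻¹ := tsum_geometric_of_lt_one (hx0 k) (hx1 k)
    _ ≤ ∏ k ∈ Finset.range N, Real.exp (2 * x k) := by
        apply Finset.prod_le_prod
        · intro k _
          exact inv_nonneg.mpr (by linarith [hx1 k])
        · intro k _; exact hinv k
    _ = Real.exp (∑ k ∈ Finset.range N, 2 * x k) := (Real.exp_sum _ _).symm
    _ ≤ Real.exp (2 * T) := by
        rw [Real.exp_le_exp]
        rw [← Finset.mul_sum]
        have : ∑ k ∈ Finset.range N, x k ≤ T :=
          Summable.sum_le_tsum _ (fun k _ => hx0 k) hxsum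
        linarith
end
end

section
/- Let u, v : ℕ → ℝ be sequences and let p, q, r > 0 satisfy 1/p + 1/q = 1/r. If ∑_{n≥0} pⁿ u_n² < ∞ and ∑_{n≥0} v_n²/rⁿ < ∞, then for each n the series D_n := ∑_{k=0}^∞ (C(n+k, k))^{1/2} v_{n+k} u_k converges absolutely and ∑_{n≥0} D_n²/qⁿ < ∞. -/
open scoped BigOperators

noncomputable section

/-- Cauchy–Schwarz for infinite sums of nonnegative reals. -/
lemma tsum_mul_sq_le_aux {x y : ℕ → ℝ} (hx : ∀ k, 0 ≤ x k) (hy : ∀ k, 0 ≤ y k)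
    (hx2 : Summable fun k => x k ^ 2) (hy2 : Summable fun k => y k ^ 2) :
    (∑' k, x k * y k) ^ 2 ≤ (∑' k, x k ^ 2) * (∑' k, y k ^ 2) := by
  set A := ∑' k, x k ^ 2 with hA
  set B := ∑' k, y k ^ 2 with hB
  have hA0 : 0 ≤ A := tsum_nonneg fun k => sq_nonneg _
  have hB0 : 0 ≤ B := tsum_nonneg fun k => sq_nonneg _
  have hs : Summable fun k => x k * y k := by
    refine Summable.of_nonneg_of_le (fun k => mul_nonneg (hx k) (hy k))
      (fun k => ?_) ((hx2.add hy2).div_const 2)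
    have := two_mul_le_add_sq (x k) (y k)
    linarith
  have key : ∀ s : Finset ℕ, ∑ k ∈ s, x k * y k ≤ Real.sqrt (A * B) := by
    intro s
    have h1 := Finset.sum_mul_sq_le_sq_mul_sq s x y
    have h2 : ∑ k ∈ s, x k ^ 2 ≤ A := Summable.sum_le_tsum s (fun _ _ => sq_nonneg _) hx2
    have h3 : ∑ k ∈ s, y k ^ 2 ≤ B := Summable.sum_le_tsum s (fun _ _ => sq_nonneg _) hy2
    have h4 : (∑ k ∈ s, x k * y k) ^ 2 ≤ A * B :=
      h1.trans (mul_le_mul h2 h3 (Finset.sum_nonneg fun _ _ => sq_nonneg _) hA0)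
    exact (Real.le_sqrt (Finset.sum_nonneg fun k _ => mul_nonneg (hx k) (hy k))
      (mul_nonneg hA0 hB0)).mpr h4
  have hT : ∑' k, x k * y k ≤ Real.sqrt (A * B) := Summable.tsum_le_of_sum_le hs key
  calc (∑' k, x k * y k) ^ 2 ≤ Real.sqrt (A * B) ^ 2 := by
        apply pow_le_pow_left₀ (tsum_nonneg fun k => mul_nonneg (hx k) (hy k)) hT
    _ = A * B := Real.sq_sqrt (mul_nonneg hA0 hB0)

set_option maxHeartbeats 1000000 in
/-- one-dimensional Malliavin derivative estimate. -/
theorem stmt6 (u v : ℕ → ℝ) (p q r : ℝ) (hp : 0 < p) (hq : 0 < q) (hr : 0 < r)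
    (hpqr : 1 / p + 1 / q = 1 / r)
    (hu : Summable fun n => p ^ n * (u n) ^ 2)
    (hv : Summable fun n => (v n) ^ 2 / r ^ n) :
    (∀ n, Summable fun k => |Real.sqrt (Nat.choose (n + k) k) * v (n + k) * u k|) ∧
    Summable (fun n =>
      (∑' k, Real.sqrt (Nat.choose (n + k) k) * v (n + k) * u k) ^ 2 / q ^ n) := by
  have hpq : 0 < p + q := by linarith
  set t : ℝ := q / (p + q) with ht_def
  have ht0 : 0 < t := div_pos hq hpq
  have ht1 : t < 1 := (div_lt_one hpq).mpr (by linarith)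
  have h1t : 1 - t = p / (p + q) := by
    rw [ht_def]
    field_simp
    ring
  have h1t0 : 0 < 1 - t := by linarith
  have hrpq : r = p * q / (p + q) := by
    have hne : p ≠ 0 := hp.ne'
    have hne' : q ≠ 0 := hq.ne'
    have hne'' : r ≠ 0 := hr.ne'
    field_simp at hpqr ⊢
    nlinarith [hpqr]
  have htp : t * p = r := by rw [ht_def, hrpq]; ring
  have h1tq : (1 - t) * q = r := by rw [h1t, hrpq]; ring
  -- the product function
  set a : ℕ → ℝ := fun k => p ^ k * u k ^ 2 with ha_def
  set b : ℕ → ℝ := fun m => v m ^ 2 / r ^ m with hb_def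
  have ha0 : ∀ k, 0 ≤ a k := fun k => mul_nonneg (pow_nonneg hp.le k) (sq_nonneg _)
  have hb0 : ∀ m, 0 ≤ b m := fun m => div_nonneg (sq_nonneg _) (pow_nonneg hr.le m)
  have hprod : Summable fun x : ℕ × ℕ => a x.1 * b x.2 :=
    Summable.mul_of_nonneg hu hv ha0 hb0
  have hinj : Function.Injective (fun x : ℕ × ℕ => (x.2, x.1 + x.2)) := by
    intro ⟨n₁, k₁⟩ ⟨n₂, k₂⟩ h
    simp only [Prod.mk.injEq] at h
    obtain ⟨h1, h2⟩ := h
    simp [Prod.ext_iff]; omega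
  have hf' := hprod.comp_injective hinj
  have hf : Summable fun x : ℕ × ℕ => a x.2 * b (x.1 + x.2) := hf'.congr (fun x => rfl)
  have hf0 : 0 ≤ fun x : ℕ × ℕ => a x.2 * b (x.1 + x.2) :=
    fun x => mul_nonneg (ha0 _) (hb0 _)
  obtain ⟨hslice, hFsum⟩ := (summable_prod_of_nonneg hf0).mp hf
  -- per-n Cauchy-Schwarz data
  have htnorm : ‖t‖ < 1 := by rw [Real.norm_eq_abs, abs_of_pos ht0]; exact ht1
  have hchoose : ∀ (n k : ℕ), ((n + k).choose k : ℝ) = ((k + n).choose n : ℝ) := by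
    intro n k
    rw [add_comm k n, Nat.choose_symm_add]
  have hCsum : ∀ n, HasSum (fun k => ((n + k).choose k : ℝ) * t ^ k)
      (1 / (1 - t) ^ (n + 1)) := by
    intro n
    have := hasSum_choose_mul_geometric_of_norm_lt_one (𝕜 := ℝ) n htnorm
    rw [show (fun k => ((n + k).choose k : ℝ) * t ^ k) = fun k => ((k + n).choose n : ℝ) * t ^ k from funext fun k => by rw [hchoose]]
    exact this
  -- x, y sequences
  set x : ℕ → ℕ → ℝ := fun n k => Real.sqrt (((n + k).choose k : ℝ) * t ^ k) with hx_def
  set y : ℕ → ℕ → ℝ := fun n k => |v (n + k) * u k| / Real.sqrt (t ^ k) with hy_def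
  have hx2 : ∀ n k, x n k ^ 2 = ((n + k).choose k : ℝ) * t ^ k := by
    intro n k
    exact Real.sq_sqrt (mul_nonneg (Nat.cast_nonneg _) (pow_nonneg ht0.le k))
  have hy2 : ∀ n k, y n k ^ 2 = (v (n + k) * u k) ^ 2 / t ^ k := by
    intro n k
    rw [hy_def]
    rw [div_pow, sq_abs, Real.sq_sqrt (pow_nonneg ht0.le k)]
  have hxy : ∀ n k, x n k * y n k = |Real.sqrt ((n + k).choose k) * v (n + k) * u k| := by
    intro n k
    have hsq : Real.sqrt (t ^ k) ≠ 0 :=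
      Real.sqrt_ne_zero'.mpr (pow_pos ht0 k)
    rw [hx_def, hy_def]
    simp only
    rw [Real.sqrt_mul (Nat.cast_nonneg _)]
    simp only [abs_mul]
    field_simp
    rw [abs_of_nonneg (Real.sqrt_nonneg _)]
    ring
  -- summability of y² for each n
  have hy2sum : ∀ n, Summable fun k => (v (n + k) * u k) ^ 2 / t ^ k := by
    intro n
    have hid : ∀ k, (v (n + k) * u k) ^ 2 / t ^ k = r ^ n * (a k * b (n + k)) := by
      intro k
      rw [ha_def, hb_def]
      simp only
      rw [pow_add, ← htp, mul_pow]
      have h1 : (t : ℝ) ^ k ≠ 0 := (pow_pos ht0 k).ne'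
      have h2 : (p : ℝ) ^ k ≠ 0 := (pow_pos hp k).ne'
      have h3 : (r : ℝ) ^ n ≠ 0 := (pow_pos hr n).ne'
      field_simp
      ring
    have := (hslice n).mul_left (r ^ n)
    apply this.congr
    intro k
    exact (hid k).symm
  have hx2sum : ∀ n, Summable fun k => ((n + k).choose k : ℝ) * t ^ k :=
    fun n => (hCsum n).summable
  -- Part 1
  have part1 : ∀ n, Summable fun k => |Real.sqrt ((n + k).choose k) * v (n + k) * u k| := by
    intro n
    have hsum : Summable fun k => x n k * y n k := by
      refine Summable.of_nonneg_of_le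
        (fun k => mul_nonneg (Real.sqrt_nonneg _) (by positivity))
        (fun k => ?_)
        ((((hx2sum n).congr fun k => (hx2 n k).symm).add
          ((hy2sum n).congr fun k => (hy2 n k).symm)).div_const 2)
      have := two_mul_le_add_sq (x n k) (y n k)
      linarith
    exact hsum.congr fun k => hxy n k
  refine ⟨part1, ?_⟩
  -- Part 2
  set D : ℕ → ℝ := fun n => ∑' k, Real.sqrt ((n + k).choose k) * v (n + k) * u k with hD_def
  set F : ℕ → ℝ := fun n => ∑' k, a k * b (n + k) with hF_def
  have hF0 : ∀ n, 0 ≤ F n := fun n => tsum_nonneg fun k => mul_nonneg (ha0 _) (hb0 _)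
  have hbound : ∀ n, D n ^ 2 / q ^ n ≤ F n / (1 - t) := by
    intro n
    have habs : |D n| ≤ ∑' k, |Real.sqrt ((n + k).choose k) * v (n + k) * u k| := by
      have hnorm : Summable fun k => ‖Real.sqrt ((n + k).choose k) * v (n + k) * u k‖ :=
        (part1 n).congr fun k => (Real.norm_eq_abs _).symm
      have h := norm_tsum_le_tsum_norm hnorm
      simpa only [Real.norm_eq_abs] using h
    have hcs : (∑' k, x n k * y n k) ^ 2 ≤
        (∑' k, x n k ^ 2) * (∑' k, y n k ^ 2) := by
      apply tsum_mul_sq_le_aux (fun k => Real.sqrt_nonneg _) (fun k => by positivity)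
      · exact (hx2sum n).congr fun k => (hx2 n k).symm
      · exact (hy2sum n).congr fun k => (hy2 n k).symm
    have hXval : ∑' k, x n k ^ 2 = 1 / (1 - t) ^ (n + 1) := by
      rw [tsum_congr (fun k => hx2 n k)]
      exact (hCsum n).tsum_eq
    have hYval : ∑' k, y n k ^ 2 = r ^ n * F n := by
      rw [tsum_congr (fun k => hy2 n k)]
      have hid : ∀ k, (v (n + k) * u k) ^ 2 / t ^ k = r ^ n * (a k * b (n + k)) := by
        intro k
        rw [ha_def, hb_def]
        simp only
        rw [pow_add, ← htp, mul_pow]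
        have h1 : (t : ℝ) ^ k ≠ 0 := (pow_pos ht0 k).ne'
        have h2 : (p : ℝ) ^ k ≠ 0 := (pow_pos hp k).ne'
        have h3 : (r : ℝ) ^ n ≠ 0 := (pow_pos hr n).ne'
        field_simp
        ring
      rw [tsum_congr hid, tsum_mul_left]
    have hDsq : D n ^ 2 ≤ (1 / (1 - t) ^ (n + 1)) * (r ^ n * F n) := by
      have h1 : D n ^ 2 = |D n| ^ 2 := (sq_abs _).symm
      have h2 : |D n| ^ 2 ≤ (∑' k, x n k * y n k) ^ 2 := by
        apply pow_le_pow_left₀ (abs_nonneg _)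
        calc |D n| ≤ ∑' k, |Real.sqrt ((n + k).choose k) * v (n + k) * u k| := habs
          _ = ∑' k, x n k * y n k := (tsum_congr fun k => (hxy n k).symm)
      rw [h1]
      calc |D n| ^ 2 ≤ (∑' k, x n k * y n k) ^ 2 := h2
        _ ≤ (∑' k, x n k ^ 2) * (∑' k, y n k ^ 2) := hcs
        _ = (1 / (1 - t) ^ (n + 1)) * (r ^ n * F n) := by rw [hXval, hYval]
    have hqn : (0:ℝ) < q ^ n := pow_pos hq n
    rw [div_le_div_iff₀ hqn h1t0]
    calc D n ^ 2 * (1 - t) ≤ (1 / (1 - t) ^ (n + 1)) * (r ^ n * F n) * (1 - t) := by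
          apply mul_le_mul_of_nonneg_right hDsq h1t0.le
      _ = F n * q ^ n := by
          have hrn : r ^ n = (1 - t) ^ n * q ^ n := by rw [← h1tq, mul_pow]
          rw [hrn]
          have h4 : ((1:ℝ) - t) ^ (n + 1) ≠ 0 := (pow_pos h1t0 (n + 1)).ne'
          field_simp
          ring
  apply Summable.of_nonneg_of_le
    (fun n => div_nonneg (sq_nonneg _) (pow_nonneg hq.le n)) hbound
  exact hFsum.div_const (1 - t)
end
end

section
/- Let u, f : ℕ → ℝ be sequences and let p, q, r > 0 satisfy 1/p + 1/q = 1/r. If ∑_{n≥0} pⁿ u_n² < ∞ and ∑_{n≥0} qⁿ f_n² < ∞, then the sequence δ_n := ∑_{k=0}^n (C(n, k))^{1/2} f_k u_{n−k} satisfies ∑_{n≥0} rⁿ δ_n² ≤ (∑_{n≥0} pⁿ u_n²)(∑_{n≥0} qⁿ f_n²). -/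
open scoped BigOperators

noncomputable section

/-- one-dimensional Skorokhod integral estimate. -/
theorem stmt7 (u f : ℕ → ℝ) (p q r : ℝ) (hp : 0 < p) (hq : 0 < q) (hr : 0 < r)
    (hpqr : 1 / p + 1 / q = 1 / r)
    (hu : Summable fun n => p ^ n * (u n) ^ 2)
    (hf : Summable fun n => q ^ n * (f n) ^ 2) :
    Summable (fun n => r ^ n *
      (∑ k ∈ Finset.range (n + 1), Real.sqrt (Nat.choose n k) * f k * u (n - k)) ^ 2) ∧
    ∑' n, r ^ n *
        (∑ k ∈ Finset.range (n + 1), Real.sqrt (Nat.choose n k) * f k * u (n - k)) ^ 2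
      ≤ (∑' n, p ^ n * (u n) ^ 2) * (∑' n, q ^ n * (f n) ^ 2) := by
  have hr1 : r / q + r / p = 1 := by
    field_simp at hpqr ⊢
    linarith [hpqr]
  set a : ℕ → ℝ := fun k => q ^ k * f k ^ 2 with ha
  set b : ℕ → ℝ := fun k => p ^ k * u k ^ 2 with hb
  have hanng : ∀ k, 0 ≤ a k := fun k => mul_nonneg (pow_nonneg hq.le _) (sq_nonneg _)
  have hbnng : ∀ k, 0 ≤ b k := fun k => mul_nonneg (pow_nonneg hp.le _) (sq_nonneg _)
  have ha' : Summable fun n => ‖a n‖ := by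
    simpa [Real.norm_of_nonneg (hanng _)] using hf
  have hb' : Summable fun n => ‖b n‖ := by
    simpa [Real.norm_of_nonneg (hbnng _)] using hu
  have hc : Summable fun n => ∑ k ∈ Finset.range (n + 1), a k * b (n - k) :=
    (summable_norm_sum_mul_range_of_summable_norm ha' hb').of_norm
  have hceq : (∑' n, ∑ k ∈ Finset.range (n + 1), a k * b (n - k))
      = (∑' n, a n) * (∑' n, b n) :=
    (tsum_mul_tsum_eq_tsum_sum_range_of_summable_norm ha' hb').symm
  -- pointwise key inequality
  have key : ∀ n, r ^ n *
      (∑ k ∈ Finset.range (n + 1), Real.sqrt (Nat.choose n k) * f k * u (n - k)) ^ 2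
      ≤ ∑ k ∈ Finset.range (n + 1), a k * b (n - k) := by
    intro n
    have hF : ∀ k ∈ Finset.range (n + 1),
        (0:ℝ) ≤ (Nat.choose n k : ℝ) * (r / q) ^ k * (r / p) ^ (n - k) := fun k _ => by
      positivity
    have hG : ∀ k ∈ Finset.range (n + 1),
        (0:ℝ) ≤ (q / r) ^ k * (p / r) ^ (n - k) * (f k ^ 2 * u (n - k) ^ 2) := fun k _ => by
      positivity
    have hsq : ∀ k ∈ Finset.range (n + 1),
        (Real.sqrt (Nat.choose n k) * f k * u (n - k)) ^ 2 =
        ((Nat.choose n k : ℝ) * (r / q) ^ k * (r / p) ^ (n - k)) *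
        ((q / r) ^ k * (p / r) ^ (n - k) * (f k ^ 2 * u (n - k) ^ 2)) := by
      intro k _
      have h1 : Real.sqrt (Nat.choose n k) ^ 2 = (Nat.choose n k : ℝ) :=
        Real.sq_sqrt (by positivity)
      have h2 : (r / q) ^ k * (q / r) ^ k = 1 := by
        rw [← mul_pow]; field_simp; exact one_pow _
      have h3 : (r / p) ^ (n - k) * (p / r) ^ (n - k) = 1 := by
        rw [← mul_pow]; field_simp; exact one_pow _
      calc (Real.sqrt (Nat.choose n k) * f k * u (n - k)) ^ 2
          = Real.sqrt (Nat.choose n k) ^ 2 * (f k ^ 2 * u (n - k) ^ 2) := by ring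
        _ = (Nat.choose n k : ℝ) * (f k ^ 2 * u (n - k) ^ 2) := by rw [h1]
        _ = _ := by
            rw [show ((Nat.choose n k : ℝ) * (r / q) ^ k * (r / p) ^ (n - k)) *
                ((q / r) ^ k * (p / r) ^ (n - k) * (f k ^ 2 * u (n - k) ^ 2)) =
                (Nat.choose n k : ℝ) * (((r / q) ^ k * (q / r) ^ k) *
                (((r / p) ^ (n - k) * (p / r) ^ (n - k)) * (f k ^ 2 * u (n - k) ^ 2))) by ring,
              h2, h3]; ring
    have CS := Finset.sum_sq_le_sum_mul_sum_of_sq_eq_mul (Finset.range (n + 1)) hF hG hsq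
    have hbin : (∑ k ∈ Finset.range (n + 1),
        (Nat.choose n k : ℝ) * (r / q) ^ k * (r / p) ^ (n - k)) = 1 := by
      have := add_pow (r / q) (r / p) n
      rw [hr1, one_pow] at this
      rw [this]
      exact Finset.sum_congr rfl fun k _ => by ring
    rw [hbin, one_mul] at CS
    calc r ^ n * (∑ k ∈ Finset.range (n + 1),
          Real.sqrt (Nat.choose n k) * f k * u (n - k)) ^ 2
        ≤ r ^ n * ∑ k ∈ Finset.range (n + 1),
            (q / r) ^ k * (p / r) ^ (n - k) * (f k ^ 2 * u (n - k) ^ 2) := by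
          exact mul_le_mul_of_nonneg_left CS (pow_nonneg hr.le _)
      _ = ∑ k ∈ Finset.range (n + 1), a k * b (n - k) := by
          rw [Finset.mul_sum]
          refine Finset.sum_congr rfl fun k hk => ?_
          have hkn : k ≤ n := Nat.lt_succ_iff.mp (Finset.mem_range.mp hk)
          have hrn : r ^ n = r ^ k * r ^ (n - k) := by
            rw [← pow_add, Nat.add_sub_cancel' hkn]
          rw [hrn, ha, hb]
          field_simp
          have e1 : r ^ k * r⁻¹ ^ k = 1 := by rw [← mul_pow, mul_inv_cancel₀ hr.ne', one_pow]
          have e2 : r ^ (n - k) * r⁻¹ ^ (n - k) = 1 := by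
            rw [← mul_pow, mul_inv_cancel₀ hr.ne', one_pow]
          linear_combination (q ^ k * p ^ (n - k) * f k ^ 2 * u (n - k) ^ 2 * (r ^ (n - k) * r⁻¹ ^ (n - k))) * e1 + (q ^ k * p ^ (n - k) * f k ^ 2 * u (n - k) ^ 2) * e2
  have hnng : ∀ n, 0 ≤ r ^ n *
      (∑ k ∈ Finset.range (n + 1), Real.sqrt (Nat.choose n k) * f k * u (n - k)) ^ 2 :=
    fun n => by positivity
  have hs : Summable (fun n => r ^ n *
      (∑ k ∈ Finset.range (n + 1), Real.sqrt (Nat.choose n k) * f k * u (n - k)) ^ 2) :=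
    Summable.of_nonneg_of_le hnng key hc
  refine ⟨hs, ?_⟩
  calc _ ≤ ∑' n, ∑ k ∈ Finset.range (n + 1), a k * b (n - k) := Summable.tsum_le_tsum key hs hc
    _ = _ := by rw [hceq, mul_comm]
end
end

section
/- Let u, v : ℕ → ℝ be sequences and let p, q, r > 0 satisfy (1/r − 1/p)(q − 1/p) = 1 and pq > 1. If ∑_{n≥0} pⁿ u_n² < ∞ and ∑_{n≥0} qⁿ v_n² < ∞, then for each n the double series L_n := ∑_{k=0}^n ∑_{m=0}^∞ (C(n,k) C(k+m,m))^{1/2} v_{k+m} u_{n−k} u_m converges absolutely and ∑_{n≥0} rⁿ L_n² < ∞. -/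
open scoped BigOperators

noncomputable section

/-- Pointwise AM-GM gives summability of `|f * g|` from square-summability. -/
lemma summable_abs_mul_of_sq {ι : Type*} {f g : ι → ℝ} (hf : Summable fun i => f i ^ 2)
    (hg : Summable fun i => g i ^ 2) : Summable fun i => |f i * g i| := by
  refine Summable.of_nonneg_of_le (fun i => abs_nonneg _) (fun i => ?_)
    ((hf.add hg).mul_left (1 / 2 : ℝ))
  have h1 : |f i * g i| = |f i| * |g i| := abs_mul _ _
  nlinarith [sq_nonneg (|f i| - |g i|), sq_abs (f i), sq_abs (g i)]

/-- Cauchy–Schwarz for `tsum`. -/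
lemma tsum_abs_mul_le_sqrt {ι : Type*} {f g : ι → ℝ} (hf : Summable fun i => f i ^ 2)
    (hg : Summable fun i => g i ^ 2) :
    ∑' i, |f i * g i| ≤ Real.sqrt ((∑' i, f i ^ 2) * (∑' i, g i ^ 2)) := by
  refine Summable.tsum_le_of_sum_le (summable_abs_mul_of_sq hf hg) fun s => ?_
  have h1 : ∑ i ∈ s, |f i * g i| = ∑ i ∈ s, |f i| * |g i| := by simp [abs_mul]
  rw [h1]
  calc ∑ i ∈ s, |f i| * |g i|
      ≤ Real.sqrt (∑ i ∈ s, |f i| ^ 2) * Real.sqrt (∑ i ∈ s, |g i| ^ 2) :=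
        Real.sum_mul_le_sqrt_mul_sqrt s _ _
    _ = Real.sqrt ((∑ i ∈ s, f i ^ 2) * (∑ i ∈ s, g i ^ 2)) := by
        rw [← Real.sqrt_mul (by positivity)]
        simp [sq_abs]
    _ ≤ _ := by
        apply Real.sqrt_le_sqrt
        have hf' := Summable.sum_le_tsum s (fun i _ => sq_nonneg (f i)) hf
        have hg' := Summable.sum_le_tsum s (fun i _ => sq_nonneg (g i)) hg
        exact mul_le_mul hf' hg' (Finset.sum_nonneg fun i _ => sq_nonneg _)
          (tsum_nonneg fun i => sq_nonneg _)


set_option maxHeartbeats 2000000 in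
/-- one-dimensional Ornstein-Uhlenbeck operator estimate.
Note `Nat.choose n k = 0` for `k > n`, so the double series over all pairs `(k,m)`
coincides with the sum over `0 ≤ k ≤ n`, `m ≥ 0`. -/
theorem stmt8 (u v : ℕ → ℝ) (p q r : ℝ) (hp : 0 < p) (hq : 0 < q) (hr : 0 < r)
    (hpqr : (1 / r - 1 / p) * (q - 1 / p) = 1) (hpq : 1 < p * q)
    (hu : Summable fun n => p ^ n * (u n) ^ 2)
    (hv : Summable fun n => q ^ n * (v n) ^ 2) :
    (∀ n, Summable fun km : ℕ × ℕ =>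
      |Real.sqrt (Nat.choose n km.1 * Nat.choose (km.1 + km.2) km.2) *
        v (km.1 + km.2) * u (n - km.1) * u km.2|) ∧
    Summable (fun n => r ^ n *
      (∑' km : ℕ × ℕ,
        Real.sqrt (Nat.choose n km.1 * Nat.choose (km.1 + km.2) km.2) *
          v (km.1 + km.2) * u (n - km.1) * u km.2) ^ 2) := by
  have hp' : p ≠ 0 := ne_of_gt hp
  have hq' : q ≠ 0 := ne_of_gt hq
  have hr' : r ≠ 0 := ne_of_gt hr
  set x : ℝ := p / q with hxdef
  set y : ℝ := (p * q)⁻¹ with hydef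
  have hpq0 : 0 < p * q := mul_pos hp hq
  have hx : 0 < x := div_pos hp hq
  have hy0 : 0 < y := inv_pos.2 hpq0
  have hy1 : y < 1 := by
    have h2 : y * (p * q) = 1 := inv_mul_cancel₀ (ne_of_gt hpq0)
    nlinarith
  have h1y : 0 < 1 - y := by linarith
  have hpq1 : p * q - 1 ≠ 0 := ne_of_gt (by linarith)
  have key : x / (1 - y) + 1 = p / r := by
    rw [hxdef, hydef]
    have h1 : 1 - (p * q)⁻¹ = (p * q - 1) / (p * q) := by field_simp
    rw [h1]
    field_simp
    field_simp at hpqr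
    nlinarith [hpqr]
  -- the two factors
  set Fsq : ℕ → ℕ × ℕ → ℝ := fun n km =>
    (Nat.choose n km.1 : ℝ) * (Nat.choose (km.1 + km.2) km.2 : ℝ) * (x ^ km.1 * y ^ km.2)
    with hFsqdef
  set Gv : ℕ → ℕ × ℕ → ℝ := fun n km =>
    if km.1 ≤ n then
      v (km.1 + km.2) * u (n - km.1) * u km.2 * Real.sqrt ((x ^ km.1 * y ^ km.2)⁻¹)
    else 0 with hGvdef
  have hFsq_nonneg : ∀ n km, 0 ≤ Fsq n km := fun n km =>
    mul_nonneg (mul_nonneg (Nat.cast_nonneg _) (Nat.cast_nonneg _))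
      (mul_nonneg (pow_nonneg hx.le _) (pow_nonneg hy0.le _))
  -- factorization of the general term
  have hfact : ∀ n (km : ℕ × ℕ),
      Real.sqrt (Nat.choose n km.1 * Nat.choose (km.1 + km.2) km.2) *
        v (km.1 + km.2) * u (n - km.1) * u km.2
      = Real.sqrt (Fsq n km) * Gv n km := by
    rintro n ⟨k, m⟩
    by_cases hk : k ≤ n
    · simp only [hGvdef, hFsqdef, if_pos hk]
      have hxy : (0 : ℝ) < x ^ k * y ^ m := by positivity
      have h1 : Real.sqrt (x ^ k * y ^ m) * Real.sqrt ((x ^ k * y ^ m)⁻¹) = 1 := by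
        rw [← Real.sqrt_mul hxy.le, mul_inv_cancel₀ hxy.ne', Real.sqrt_one]
      rw [Real.sqrt_mul (by positivity : (0:ℝ) ≤ (Nat.choose n k : ℝ) * (Nat.choose (k+m) m : ℝ))]
      linear_combination
        (Real.sqrt ((Nat.choose n k : ℝ) * (Nat.choose (k+m) m : ℝ)) *
          (v (k + m) * u (n - k) * u m)) * h1.symm
    · have hc : Nat.choose n k = 0 := Nat.choose_eq_zero_of_lt (lt_of_not_ge hk)
      simp [hGvdef, hFsqdef, hc, if_neg hk]
  -- first factor: summability and value
  have hynorm : ‖y‖ < 1 := by rw [Real.norm_eq_abs, abs_of_pos hy0]; exact hy1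
  have hFinner : ∀ n k, HasSum (fun m => Fsq n (k, m))
      ((Nat.choose n k : ℝ) * x ^ k * (1 / (1 - y) ^ (k + 1))) := by
    intro n k
    have h := (hasSum_choose_mul_geometric_of_norm_lt_one k hynorm).mul_left
      ((Nat.choose n k : ℝ) * x ^ k)
    refine h.congr_fun fun m => ?_
    simp only [hFsqdef]
    have hnat : (k + m).choose m = (m + k).choose k := by
      rw [Nat.add_comm]; exact Nat.choose_symm_add
    have hcc : ((k + m).choose m : ℝ) = ((m + k).choose k : ℝ) := by exact_mod_cast hnat
    rw [hcc]; ring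
  set gf : ℕ → ℕ → ℝ := fun n k =>
    (Nat.choose n k : ℝ) * x ^ k * (1 / (1 - y) ^ (k + 1)) with hgfdef
  have hgzero : ∀ n, ∀ k ∉ Finset.range (n + 1), gf n k = 0 := by
    intro n k hk
    have : n < k := by simpa [Finset.mem_range] using hk
    simp [hgfdef, Nat.choose_eq_zero_of_lt this]
  have hgsummable : ∀ n, Summable (gf n) := fun n => summable_of_ne_finset_zero (hgzero n)
  have hgsum : ∀ n, ∑' k, gf n k = (1 - y)⁻¹ * (p / r) ^ n := by
    intro n
    rw [tsum_eq_sum (hgzero n)]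
    have hstep : ∀ k ∈ Finset.range (n + 1),
        gf n k = (1 - y)⁻¹ * ((x / (1 - y)) ^ k * 1 ^ (n - k) * (Nat.choose n k : ℝ)) := by
      intro k hk
      simp only [hgfdef, one_pow, mul_one, div_pow]
      have h2 : ((1 : ℝ) - y) ^ k ≠ 0 := pow_ne_zero _ h1y.ne'
      field_simp
      ring
    rw [Finset.sum_congr rfl hstep, ← Finset.mul_sum, ← add_pow, key]
  have hFsummable : ∀ n, Summable (Fsq n) := by
    intro n
    refine (summable_prod_of_nonneg (fun km => hFsq_nonneg n km)).2
      ⟨fun k => (hFinner n k).summable, ?_⟩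
    refine (hgsummable n).congr fun k => ?_
    exact ((hFinner n k).tsum_eq).symm
  have hFtsum : ∀ n, ∑' km : ℕ × ℕ, Fsq n km = (1 - y)⁻¹ * (p / r) ^ n := by
    intro n
    rw [Summable.tsum_prod' (hFsummable n) (fun k => (hFinner n k).summable)]
    calc ∑' k, ∑' m, Fsq n (k, m) = ∑' k, gf n k :=
          tsum_congr fun k => (hFinner n k).tsum_eq
      _ = _ := hgsum n
  -- second factor: the triple-indexed comparison function
  set H : ℕ × ℕ × ℕ → ℝ := fun z =>
    (p ^ z.1 * u z.1 ^ 2) *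
      ((p ^ z.2.1 * u z.2.1 ^ 2) * (q ^ (z.2.2 + z.2.1) * v (z.2.2 + z.2.1) ^ 2)) with hHdef
  have hHnonneg : ∀ z, 0 ≤ H z := by
    intro z
    exact mul_nonneg (mul_nonneg (pow_nonneg hp.le _) (sq_nonneg _))
      (mul_nonneg (mul_nonneg (pow_nonneg hp.le _) (sq_nonneg _))
        (mul_nonneg (pow_nonneg hq.le _) (sq_nonneg _)))
  set V : ℝ := ∑' t, q ^ t * v t ^ 2 with hVdef
  have hφ : Summable (fun mk : ℕ × ℕ =>
      (p ^ mk.1 * u mk.1 ^ 2) * (q ^ (mk.2 + mk.1) * v (mk.2 + mk.1) ^ 2)) := by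
    have hnn : ∀ mk : ℕ × ℕ, 0 ≤
        (p ^ mk.1 * u mk.1 ^ 2) * (q ^ (mk.2 + mk.1) * v (mk.2 + mk.1) ^ 2) := by
      intro mk
      exact mul_nonneg (mul_nonneg (pow_nonneg hp.le _) (sq_nonneg _))
        (mul_nonneg (pow_nonneg hq.le _) (sq_nonneg _))
    refine (summable_prod_of_nonneg hnn).2 ⟨fun m => ?_, ?_⟩
    · exact (hv.comp_injective (add_left_injective m)).mul_left (p ^ m * u m ^ 2)
    · refine Summable.of_nonneg_of_le (fun m => tsum_nonneg fun k => hnn (m, k))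
        (fun m => ?_) (hu.mul_right V)
      have h2 : ∑' k, (p ^ m * u m ^ 2) * (q ^ (k + m) * v (k + m) ^ 2)
          = (p ^ m * u m ^ 2) * ∑' k, q ^ (k + m) * v (k + m) ^ 2 := tsum_mul_left
      rw [h2]
      have h3 : ∑' k, q ^ (k + m) * v (k + m) ^ 2 ≤ V := by
        refine Summable.tsum_le_tsum_of_inj (· + m) (add_left_injective m)
          (fun t _ => mul_nonneg (pow_nonneg hq.le _) (sq_nonneg _)) (fun k => le_rfl)
          (hv.comp_injective (add_left_injective m)) hv
      exact mul_le_mul_of_nonneg_left h3 (mul_nonneg (pow_nonneg hp.le _) (sq_nonneg _))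
  have hH : Summable H :=
    hu.mul_of_nonneg hφ (fun j => mul_nonneg (pow_nonneg hp.le _) (sq_nonneg _))
      (fun mk => mul_nonneg (mul_nonneg (pow_nonneg hp.le _) (sq_nonneg _))
        (mul_nonneg (pow_nonneg hq.le _) (sq_nonneg _)))
  set T : ℕ × ℕ × ℕ → ℝ := fun z =>
    if z.2.1 ≤ z.1 then H (z.1 - z.2.1, z.2.2, z.2.1) else 0 with hTdef
  have hTnonneg : ∀ z, 0 ≤ T z := by
    intro z
    simp only [hTdef]
    split
    · exact hHnonneg _
    · exact le_rfl
  set ι : ℕ × ℕ × ℕ → ℕ × ℕ × ℕ := fun z => (z.1 + z.2.2, z.2.2, z.2.1) with hιdef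
  have hιinj : Function.Injective ι := by
    rintro ⟨j, m, k⟩ ⟨j', m', k'⟩ h
    simp only [hιdef, Prod.mk.injEq] at h
    obtain ⟨h1, h2, h3⟩ := h
    refine Prod.ext ?_ (Prod.ext h3 h2)
    omega
  have hTvanish : ∀ z ∉ Set.range ι, T z = 0 := by
    rintro ⟨n, k, m⟩ hz
    simp only [hTdef]
    rw [if_neg]
    intro hk
    exact hz ⟨(n - k, m, k), by simp [hιdef, Nat.sub_add_cancel hk]⟩
  have hT : Summable T := by
    rw [← Function.Injective.summable_iff hιinj hTvanish]
    refine hH.congr fun z => ?_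
    obtain ⟨j, m, k⟩ := z
    simp [hTdef, hιdef, Nat.le_add_left, Nat.add_sub_cancel, Function.comp]
  -- link `T` with the square of the second factor
  have hGsq : ∀ n k m, Gv n (k, m) ^ 2 = (p ^ n)⁻¹ * T (n, k, m) := by
    intro n k m
    by_cases hk : k ≤ n
    · simp only [hGvdef, hTdef, hHdef, if_pos hk]
      have hxy : (0 : ℝ) ≤ (x ^ k * y ^ m)⁻¹ :=
        inv_nonneg.2 (mul_nonneg (pow_nonneg hx.le _) (pow_nonneg hy0.le _))
      rw [mul_pow, mul_pow, mul_pow, Real.sq_sqrt hxy]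
      have hsplit : p ^ n = p ^ (n - k) * p ^ k := by
        rw [← pow_add, Nat.sub_add_cancel hk]
      rw [hsplit, hxdef, hydef]
      have hpk : (p : ℝ) ^ k ≠ 0 := pow_ne_zero _ hp'
      have hpnk : (p : ℝ) ^ (n - k) ≠ 0 := pow_ne_zero _ hp'
      field_simp
      rw [div_pow, div_pow, one_pow, mul_pow, pow_add]; field_simp
    · simp [hGvdef, hTdef, if_neg hk]
  have hGsqSummable : ∀ n, Summable fun km : ℕ × ℕ => Gv n km ^ 2 := by
    intro n
    refine ((hT.prod_factor n).mul_left ((p ^ n)⁻¹)).congr fun km => ?_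
    exact (hGsq n km.1 km.2).symm
  -- Part 1: absolute summability for each n
  have part1 : ∀ n, Summable fun km : ℕ × ℕ =>
      |Real.sqrt (Nat.choose n km.1 * Nat.choose (km.1 + km.2) km.2) *
        v (km.1 + km.2) * u (n - km.1) * u km.2| := by
    intro n
    have hf2 : Summable fun km : ℕ × ℕ => Real.sqrt (Fsq n km) ^ 2 :=
      (hFsummable n).congr fun km => (Real.sq_sqrt (hFsq_nonneg n km)).symm
    refine (summable_abs_mul_of_sq hf2 (hGsqSummable n)).congr fun km => ?_
    rw [← hfact n km]
  -- Part 2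
  have part2 : Summable (fun n => r ^ n *
      (∑' km : ℕ × ℕ,
        Real.sqrt (Nat.choose n km.1 * Nat.choose (km.1 + km.2) km.2) *
          v (km.1 + km.2) * u (n - km.1) * u km.2) ^ 2) := by
    have hTsum : Summable fun n => ∑' km : ℕ × ℕ, T (n, km.1, km.2) :=
      ((summable_prod_of_nonneg (fun z => hTnonneg z)).1 hT).2
    refine Summable.of_nonneg_of_le
      (fun n => mul_nonneg (pow_nonneg hr.le _) (sq_nonneg _)) (fun n => ?_)
      (hTsum.mul_left ((1 - y)⁻¹))
    set L : ℝ := ∑' km : ℕ × ℕ,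
      Real.sqrt (Nat.choose n km.1 * Nat.choose (km.1 + km.2) km.2) *
        v (km.1 + km.2) * u (n - km.1) * u km.2 with hLdef
    have hf2 : Summable fun km : ℕ × ℕ => Real.sqrt (Fsq n km) ^ 2 :=
      (hFsummable n).congr fun km => (Real.sq_sqrt (hFsq_nonneg n km)).symm
    set S : ℝ := ∑' km : ℕ × ℕ, Gv n km ^ 2 with hSdef
    have hSnonneg : 0 ≤ S := tsum_nonneg fun km => sq_nonneg _
    have hA : ∑' km : ℕ × ℕ, Real.sqrt (Fsq n km) ^ 2 = (1 - y)⁻¹ * (p / r) ^ n := by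
      rw [← hFtsum n]
      exact tsum_congr fun km => Real.sq_sqrt (hFsq_nonneg n km)
    have hAnonneg : (0:ℝ) ≤ (1 - y)⁻¹ * (p / r) ^ n :=
      mul_nonneg (inv_nonneg.2 h1y.le) (pow_nonneg (div_nonneg hp.le hr.le) _)
    -- |L| ≤ √(A * S)
    have hLabs : |L| ≤ Real.sqrt ((1 - y)⁻¹ * (p / r) ^ n * S) := by
      have habs : Summable fun km : ℕ × ℕ => |Real.sqrt (Fsq n km) * Gv n km| :=
        summable_abs_mul_of_sq hf2 (hGsqSummable n)
      have h0 : |L| ≤ ∑' km : ℕ × ℕ, |Real.sqrt (Fsq n km) * Gv n km| := by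
        rw [hLdef]
        calc |∑' km : ℕ × ℕ,
              Real.sqrt (Nat.choose n km.1 * Nat.choose (km.1 + km.2) km.2) *
                v (km.1 + km.2) * u (n - km.1) * u km.2|
            = |∑' km : ℕ × ℕ, Real.sqrt (Fsq n km) * Gv n km| := by
              rw [tsum_congr (fun km => hfact n km)]
          _ ≤ ∑' km : ℕ × ℕ, |Real.sqrt (Fsq n km) * Gv n km| := by
              have habs' : Summable fun km : ℕ × ℕ => ‖Real.sqrt (Fsq n km) * Gv n km‖ := by
                simpa only [Real.norm_eq_abs] using habs
              simpa only [Real.norm_eq_abs] using norm_tsum_le_tsum_norm habs'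
      refine h0.trans ?_
      have h1 := tsum_abs_mul_le_sqrt hf2 (hGsqSummable n)
      rwa [hA] at h1
    have hLsq : L ^ 2 ≤ (1 - y)⁻¹ * (p / r) ^ n * S := by
      have h2 : |L| ^ 2 ≤ Real.sqrt ((1 - y)⁻¹ * (p / r) ^ n * S) ^ 2 :=
        pow_le_pow_left₀ (abs_nonneg _) hLabs 2
      rwa [sq_abs, Real.sq_sqrt (mul_nonneg hAnonneg hSnonneg)] at h2
    have hTS : p ^ n * S = ∑' km : ℕ × ℕ, T (n, km.1, km.2) := by
      rw [hSdef, ← tsum_mul_left]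
      refine tsum_congr fun km => ?_
      rw [hGsq n km.1 km.2, ← mul_assoc, mul_inv_cancel₀ (pow_ne_zero _ hp'), one_mul]
    calc r ^ n * L ^ 2 ≤ r ^ n * ((1 - y)⁻¹ * (p / r) ^ n * S) := by
          exact mul_le_mul_of_nonneg_left hLsq (pow_nonneg hr.le _)
      _ = (1 - y)⁻¹ * (p ^ n * S) := by
          rw [div_pow]
          field_simp
      _ = (1 - y)⁻¹ * ∑' km : ℕ × ℕ, T (n, km.1, km.2) := by rw [hTS]
  exact ⟨part1, part2⟩
end
end

section
/- Let p, q, r be sequences of positive numbers with 1/p_k² + 1/q_k² = 1/r_k² for all k. Let U, X be Hilbert spaces, (u_α) a family in U with ∑_α p^{2α}‖u_α‖² < ∞ and (f_α) a family in X⊗U with ∑_α q^{2α}‖f_α‖² < ∞. Define g_γ = ∑_{α+β=γ} C(γ,α)^{1/2} (f_α, u_β)_U ∈ X (a finite sum, with the U-pairing applied to the U-component of f_α). Then ∑_γ r^{2γ}‖g_γ‖_X² ≤ (∑_α p^{2α}‖u_α‖²)(∑_α q^{2α}‖f_α‖²). -/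
open scoped BigOperators

noncomputable section

lemma mpow_eq_prod (x : ℕ → ℝ) (α : MultiIndex) {s : Finset ℕ} (h : α.support ⊆ s) :
    mpow x α = ∏ k ∈ s, x k ^ α k :=
  Finset.prod_subset h fun k _ hk => by
    rw [Finsupp.notMem_support_iff.1 hk, pow_zero]

lemma mpow_add (x : ℕ → ℝ) (α β : MultiIndex) :
    mpow x (α + β) = mpow x α * mpow x β := by
  rw [mpow_eq_prod x (α + β) Finsupp.support_add,
    mpow_eq_prod x α (Finset.subset_union_left (s₂ := β.support)),
    mpow_eq_prod x β (Finset.subset_union_right (s₁ := α.support)),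
    ← Finset.prod_mul_distrib]
  exact Finset.prod_congr rfl fun k _ => by rw [Finsupp.add_apply, pow_add]

lemma mpow_mul (x y : ℕ → ℝ) (α : MultiIndex) :
    mpow (fun k => x k * y k) α = mpow x α * mpow y α := by
  unfold mpow
  rw [← Finset.prod_mul_distrib]
  exact Finset.prod_congr rfl fun k _ => mul_pow _ _ _

lemma mpow_pos {x : ℕ → ℝ} (hx : ∀ k, 0 < x k) (α : MultiIndex) : 0 < mpow x α :=
  Finset.prod_pos fun k _ => pow_pos (hx k) _

lemma sum_Iic_prod (γ : MultiIndex) (g : ℕ → ℕ → ℝ) :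
    ∑ α ∈ Finset.Iic γ, ∏ k ∈ γ.support, g k (α k)
      = ∏ k ∈ γ.support, ∑ i ∈ Finset.Icc 0 (γ k), g k i := by
  classical
  rw [Finset.prod_sum]
  have h : Finset.Iic γ = γ.support.finsupp fun k => Finset.Icc 0 (γ k) := by
    ext α
    simp only [Finset.mem_Iic, Finset.mem_finsupp_iff, Finset.mem_Icc, zero_le, true_and]
    constructor
    · intro hα
      exact ⟨Finsupp.support_mono hα, fun k _ => hα k⟩
    · intro ⟨h1, h2⟩ k
      by_cases hk : k ∈ γ.support
      · exact h2 k hk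
      · have : k ∉ α.support := fun hh => hk (h1 hh)
        rw [Finsupp.notMem_support_iff.1 this]
        exact Nat.zero_le _
  rw [h, Finset.finsupp, Finset.sum_map]
  refine Finset.sum_congr (by congr; exact Subsingleton.elim _ _) fun p hp => ?_
  simp only [Function.Embedding.coeFn_mk]
  rw [← Finset.prod_attach γ.support fun k => g k (Finsupp.indicator γ.support p k)]
  exact Finset.prod_congr rfl fun k _ => by rw [Finsupp.indicator_of_mem k.2]

lemma key_sum (γ : MultiIndex) (x y : ℕ → ℝ) :
    ∑ α ∈ Finset.Iic γ, (mchoose γ α : ℝ) * mpow x α * mpow y (γ - α)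
      = ∏ k ∈ γ.support, (x k + y k) ^ γ k := by
  classical
  have step : ∀ α ∈ Finset.Iic γ, (mchoose γ α : ℝ) * mpow x α * mpow y (γ - α)
      = ∏ k ∈ γ.support, ((γ k).choose (α k) * x k ^ α k * y k ^ (γ k - α k)) := by
    intro α hα
    rw [Finset.mem_Iic] at hα
    have hsub : α.support ⊆ γ.support := Finsupp.support_mono hα
    have h1 : (mchoose γ α : ℝ) = ∏ k ∈ γ.support, ((γ k).choose (α k) : ℝ) := by
      rw [mchoose, Finset.union_eq_left.2 hsub, Nat.cast_prod]
    have h2 : mpow x α = ∏ k ∈ γ.support, x k ^ α k := mpow_eq_prod x α hsub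
    have h3 : mpow y (γ - α) = ∏ k ∈ γ.support, y k ^ (γ k - α k) := by
      rw [mpow_eq_prod y (γ - α) Finsupp.support_tsub]
      exact Finset.prod_congr rfl fun k _ => by rw [Finsupp.tsub_apply]
    rw [h1, h2, h3, ← Finset.prod_mul_distrib, ← Finset.prod_mul_distrib]
  rw [Finset.sum_congr rfl step,
    sum_Iic_prod γ (fun k i => ((γ k).choose i : ℝ) * x k ^ i * y k ^ (γ k - i))]
  refine Finset.prod_congr rfl fun k _ => ?_
  have : Finset.Icc 0 (γ k) = Finset.range (γ k + 1) := by
    ext i; simp [Nat.lt_succ_iff]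
  rw [this, add_pow]
  exact Finset.sum_congr rfl fun i _ => by ring

lemma per_gamma {U X W : Type*}
    [NormedAddCommGroup U] [InnerProductSpace ℝ U]
    [NormedAddCommGroup X] [InnerProductSpace ℝ X]
    [NormedAddCommGroup W] [InnerProductSpace ℝ W]
    (P : W →ₗ[ℝ] U →ₗ[ℝ] X) (hP : ∀ (w : W) (y : U), ‖P w y‖ ≤ ‖w‖ * ‖y‖)
    (p q r : ℕ → ℝ) (hp : ∀ k, 0 < p k) (hq : ∀ k, 0 < q k) (hr : ∀ k, 0 < r k)
    (hpqr : ∀ k, 1 / (p k) ^ 2 + 1 / (q k) ^ 2 = 1 / (r k) ^ 2)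
    (u : MultiIndex → U) (f : MultiIndex → W) (γ : MultiIndex) :
    mpow (fun k => (r k) ^ 2) γ *
      ‖∑ α ∈ Finset.Iic γ, Real.sqrt (mchoose γ α) • P (f α) (u (γ - α))‖ ^ 2
    ≤ ∑ α ∈ Finset.Iic γ,
        (mpow (fun k => (q k) ^ 2) α * ‖f α‖ ^ 2) *
        (mpow (fun k => (p k) ^ 2) (γ - α) * ‖u (γ - α)‖ ^ 2) := by
  classical
  set x : ℕ → ℝ := fun k => r k ^ 2 / q k ^ 2 with hxdef
  set y : ℕ → ℝ := fun k => r k ^ 2 / p k ^ 2 with hydef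
  have hxpos : ∀ k, 0 < x k := fun k => div_pos (pow_pos (hr k) 2) (pow_pos (hq k) 2)
  have hypos : ∀ k, 0 < y k := fun k => div_pos (pow_pos (hr k) 2) (pow_pos (hp k) 2)
  have hxy : ∀ k, x k + y k = 1 := by
    intro k
    have hrk : (r k) ^ 2 ≠ 0 := (pow_pos (hr k) 2).ne'
    calc x k + y k = (r k) ^ 2 * (1 / (p k) ^ 2 + 1 / (q k) ^ 2) := by
          simp only [hxdef, hydef]; ring
      _ = (r k) ^ 2 * (1 / (r k) ^ 2) := by rw [hpqr k]
      _ = 1 := by field_simp; exact div_self (hr k).ne'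
  have hq2 : ∀ α, mpow x α * mpow (fun k => q k ^ 2) α = mpow (fun k => r k ^ 2) α := by
    intro α
    rw [← mpow_mul]
    congr 1
    funext k
    exact div_mul_cancel₀ _ (pow_pos (hq k) 2).ne'
  have hp2 : ∀ α, mpow y α * mpow (fun k => p k ^ 2) α = mpow (fun k => r k ^ 2) α := by
    intro α
    rw [← mpow_mul]
    congr 1
    funext k
    exact div_mul_cancel₀ _ (pow_pos (hp k) 2).ne'
  set R : ℝ := mpow (fun k => r k ^ 2) γ with hRdef
  have hRpos : 0 < R := mpow_pos (fun k => pow_pos (hr k) 2) γ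
  set T : ℝ := ∑ α ∈ Finset.Iic γ,
      Real.sqrt (mchoose γ α) * (‖f α‖ * ‖u (γ - α)‖) with hTdef
  have hT0 : 0 ≤ T := Finset.sum_nonneg fun α _ => mul_nonneg (Real.sqrt_nonneg _)
    (mul_nonneg (norm_nonneg _) (norm_nonneg _))
  have hnorm : ‖∑ α ∈ Finset.Iic γ, Real.sqrt (mchoose γ α) • P (f α) (u (γ - α))‖ ≤ T := by
    refine (norm_sum_le _ _).trans (Finset.sum_le_sum fun α _ => ?_)
    rw [norm_smul, Real.norm_eq_abs, abs_of_nonneg (Real.sqrt_nonneg _)]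
    exact mul_le_mul_of_nonneg_left (hP _ _) (Real.sqrt_nonneg _)
  set g1 : MultiIndex → ℝ := fun α =>
    Real.sqrt ((mchoose γ α : ℝ) * mpow x α * mpow y (γ - α)) with hg1
  set g2 : MultiIndex → ℝ := fun α =>
    Real.sqrt (mpow (fun k => q k ^ 2) α * mpow (fun k => p k ^ 2) (γ - α)) *
      (‖f α‖ * ‖u (γ - α)‖) with hg2
  have hsplit : ∀ α ∈ Finset.Iic γ,
      Real.sqrt R * (Real.sqrt (mchoose γ α) * (‖f α‖ * ‖u (γ - α)‖)) = g1 α * g2 α := by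
    intro α hα
    rw [Finset.mem_Iic] at hα
    have hRsplit : R * (mchoose γ α : ℝ) =
        ((mchoose γ α : ℝ) * mpow x α * mpow y (γ - α)) *
          (mpow (fun k => q k ^ 2) α * mpow (fun k => p k ^ 2) (γ - α)) := by
      have : R = mpow (fun k => r k ^ 2) α * mpow (fun k => r k ^ 2) (γ - α) := by
        rw [hRdef, ← mpow_add]
        congr 1
        exact (add_tsub_cancel_of_le hα).symm
      rw [this, ← hq2 α, ← hp2 (γ - α)]
      ring
    have h1 : Real.sqrt R * Real.sqrt (mchoose γ α) = Real.sqrt (R * (mchoose γ α : ℝ)) :=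
      (Real.sqrt_mul hRpos.le _).symm
    rw [← mul_assoc, h1, hRsplit, Real.sqrt_mul
      (mul_nonneg (mul_nonneg (Nat.cast_nonneg _) (mpow_pos hxpos _).le) (mpow_pos hypos _).le) _, hg1, hg2]
    ring
  have key1 : ∑ α ∈ Finset.Iic γ, g1 α ^ 2 = 1 := by
    have : ∀ α ∈ Finset.Iic γ, g1 α ^ 2 = (mchoose γ α : ℝ) * mpow x α * mpow y (γ - α) := by
      intro α _
      exact Real.sq_sqrt (mul_nonneg (mul_nonneg (Nat.cast_nonneg _) (mpow_pos hxpos _).le) (mpow_pos hypos _).le)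
    rw [Finset.sum_congr rfl this, key_sum]
    rw [Finset.prod_congr rfl fun k _ => by rw [hxy k]]
    simp
  have key2 : ∀ α ∈ Finset.Iic γ, g2 α ^ 2 =
      (mpow (fun k => q k ^ 2) α * ‖f α‖ ^ 2) *
      (mpow (fun k => p k ^ 2) (γ - α) * ‖u (γ - α)‖ ^ 2) := by
    intro α _
    rw [hg2]
    rw [mul_pow, Real.sq_sqrt (mul_nonneg (mpow_pos (fun k => pow_pos (hq k) 2) _).le
      (mpow_pos (fun k => pow_pos (hp k) 2) _).le)]
    ring
  calc R * ‖∑ α ∈ Finset.Iic γ, Real.sqrt (mchoose γ α) • P (f α) (u (γ - α))‖ ^ 2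
      = (Real.sqrt R * ‖∑ α ∈ Finset.Iic γ, Real.sqrt (mchoose γ α) • P (f α) (u (γ - α))‖) ^ 2 := by
        rw [mul_pow, Real.sq_sqrt hRpos.le]
    _ ≤ (Real.sqrt R * T) ^ 2 := by
        apply pow_le_pow_left₀ (by positivity)
        exact mul_le_mul_of_nonneg_left hnorm (Real.sqrt_nonneg _)
    _ = (∑ α ∈ Finset.Iic γ, g1 α * g2 α) ^ 2 := by
        rw [hTdef, Finset.mul_sum, Finset.sum_congr rfl hsplit]
    _ ≤ (∑ α ∈ Finset.Iic γ, g1 α ^ 2) * ∑ α ∈ Finset.Iic γ, g2 α ^ 2 :=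
        Finset.sum_mul_sq_le_sq_mul_sq _ _ _
    _ = ∑ α ∈ Finset.Iic γ,
        (mpow (fun k => q k ^ 2) α * ‖f α‖ ^ 2) *
        (mpow (fun k => p k ^ 2) (γ - α) * ‖u (γ - α)‖ ^ 2) := by
        rw [key1, one_mul, Finset.sum_congr rfl key2]

def prodSigmaEquiv : (MultiIndex × MultiIndex) ≃ (Σ γ : MultiIndex, ↥(Finset.Iic γ)) where
  toFun z := ⟨z.1 + z.2, ⟨z.1, Finset.mem_Iic.2 le_self_add⟩⟩
  invFun z := (z.2.1, z.1 - z.2.1)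
  left_inv z := by
    cases z with
    | mk a b => simp
  right_inv z := by
    rcases z with ⟨γ, α, hα⟩
    exact Sigma.subtype_ext (add_tsub_cancel_of_le (Finset.mem_Iic.1 hα)) rfl

/-- Theorem 4.3(a): Skorokhod integral bound.
`W` plays the role of `X ⊗ U` and `P` of the partial inner product
`(·,·)_U : (X⊗U) × U → X`, which is norm-contractive. -/
theorem stmt11 {U X W : Type*}
    [NormedAddCommGroup U] [InnerProductSpace ℝ U]
    [NormedAddCommGroup X] [InnerProductSpace ℝ X]
    [NormedAddCommGroup W] [InnerProductSpace ℝ W]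
    (P : W →ₗ[ℝ] U →ₗ[ℝ] X) (hP : ∀ (w : W) (y : U), ‖P w y‖ ≤ ‖w‖ * ‖y‖)
    (p q r : ℕ → ℝ) (hp : ∀ k, 0 < p k) (hq : ∀ k, 0 < q k) (hr : ∀ k, 0 < r k)
    (hpqr : ∀ k, 1 / (p k) ^ 2 + 1 / (q k) ^ 2 = 1 / (r k) ^ 2)
    (u : MultiIndex → U) (f : MultiIndex → W)
    (hu : Summable fun α => mpow (fun k => (p k) ^ 2) α * ‖u α‖ ^ 2)
    (hf : Summable fun α => mpow (fun k => (q k) ^ 2) α * ‖f α‖ ^ 2) :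
    Summable (fun γ : MultiIndex => mpow (fun k => (r k) ^ 2) γ *
      ‖∑ α ∈ Finset.Iic γ, Real.sqrt (mchoose γ α) • P (f α) (u (γ - α))‖ ^ 2) ∧
    ∑' γ : MultiIndex, mpow (fun k => (r k) ^ 2) γ *
        ‖∑ α ∈ Finset.Iic γ, Real.sqrt (mchoose γ α) • P (f α) (u (γ - α))‖ ^ 2
      ≤ (∑' α : MultiIndex, mpow (fun k => (p k) ^ 2) α * ‖u α‖ ^ 2) *
        (∑' α : MultiIndex, mpow (fun k => (q k) ^ 2) α * ‖f α‖ ^ 2) := by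
  classical
  set A : MultiIndex → ℝ := fun α => mpow (fun k => q k ^ 2) α * ‖f α‖ ^ 2 with hA
  set B : MultiIndex → ℝ := fun β => mpow (fun k => p k ^ 2) β * ‖u β‖ ^ 2 with hB
  have hA0 : ∀ α, 0 ≤ A α := fun α =>
    mul_nonneg (mpow_pos (fun k => pow_pos (hq k) 2) α).le (sq_nonneg _)
  have hB0 : ∀ β, 0 ≤ B β := fun β =>
    mul_nonneg (mpow_pos (fun k => pow_pos (hp k) 2) β).le (sq_nonneg _)
  have hF : Summable (fun z : MultiIndex × MultiIndex => A z.1 * B z.2) :=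
    hf.mul_of_nonneg hu hA0 hB0
  have hG : Summable (fun z : Σ γ : MultiIndex, ↥(Finset.Iic γ) =>
      A (z.2 : MultiIndex) * B (z.1 - (z.2 : MultiIndex))) :=
    (Equiv.summable_iff prodSigmaEquiv.symm).2 hF
  have hH : Summable (fun γ : MultiIndex => ∑ α ∈ Finset.Iic γ, A α * B (γ - α)) :=
    hG.sigma.congr fun γ => Finset.tsum_subtype (Finset.Iic γ) (fun α => A α * B (γ - α))
  have htsum : ∑' γ : MultiIndex, ∑ α ∈ Finset.Iic γ, A α * B (γ - α)
      = (∑' α, A α) * (∑' β, B β) := by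
    calc ∑' γ : MultiIndex, ∑ α ∈ Finset.Iic γ, A α * B (γ - α)
        = ∑' γ : MultiIndex, ∑' c : ↥(Finset.Iic γ), A (c : MultiIndex) * B (γ - c) :=
          tsum_congr fun γ => (Finset.tsum_subtype _ _).symm
      _ = ∑' z : Σ γ : MultiIndex, ↥(Finset.Iic γ),
            A (z.2 : MultiIndex) * B (z.1 - (z.2 : MultiIndex)) := (Summable.tsum_sigma hG).symm
      _ = ∑' z : MultiIndex × MultiIndex, A z.1 * B z.2 :=
          Equiv.tsum_eq prodSigmaEquiv.symm (fun z : MultiIndex × MultiIndex => A z.1 * B z.2)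
      _ = (∑' α, A α) * (∑' β, B β) := by
          rw [Summable.tsum_prod' hF fun a => hu.mul_left (A a)]
          simp_rw [tsum_mul_left]
          exact tsum_mul_right
  have hle : ∀ γ : MultiIndex, mpow (fun k => (r k) ^ 2) γ *
      ‖∑ α ∈ Finset.Iic γ, Real.sqrt (mchoose γ α) • P (f α) (u (γ - α))‖ ^ 2
      ≤ ∑ α ∈ Finset.Iic γ, A α * B (γ - α) :=
    fun γ => per_gamma P hP p q r hp hq hr hpqr u f γ
  have h0 : ∀ γ : MultiIndex, 0 ≤ mpow (fun k => (r k) ^ 2) γ *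
      ‖∑ α ∈ Finset.Iic γ, Real.sqrt (mchoose γ α) • P (f α) (u (γ - α))‖ ^ 2 :=
    fun γ => mul_nonneg (mpow_pos (fun k => pow_pos (hr k) 2) γ).le (sq_nonneg _)
  have hsummable := Summable.of_nonneg_of_le h0 hle hH
  refine ⟨hsummable, ?_⟩
  calc ∑' γ : MultiIndex, mpow (fun k => (r k) ^ 2) γ *
        ‖∑ α ∈ Finset.Iic γ, Real.sqrt (mchoose γ α) • P (f α) (u (γ - α))‖ ^ 2
      ≤ ∑' γ : MultiIndex, ∑ α ∈ Finset.Iic γ, A α * B (γ - α) :=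
        Summable.tsum_le_tsum hle hsummable hH
    _ = (∑' α, A α) * (∑' β, B β) := htsum
    _ = (∑' β, B β) * (∑' α, A α) := mul_comm _ _
end
end

section
/- In the one-dimensional case: if u, f, v : ℕ → ℝ and p, q, r > 0 with 1/p + 1/q = 1/r and r < p, and ∑_n pⁿu_n² < ∞, ∑_n qⁿf_n² < ∞, ∑_n v_n²/rⁿ < ∞, then the duality ∑_n (δ_u(f))_n v_n = ∑_n f_n (D_u(v))_n holds, where (δ_u(f))_n = ∑_{k=0}^n C(n,k)^{1/2} f_k u_{n−k} and (D_u(v))_n = ∑_{k≥0} C(n+k,k)^{1/2} v_{n+k} u_k, with all series converging absolutely. -/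
open scoped BigOperators

noncomputable section

/-- A single term of the binomial expansion of `(s+t)^(n+k) = 1` is at most `1`. -/
lemma choose_st_le {s t : ℝ} (hs : 0 ≤ s) (ht : 0 ≤ t) (hst : s + t = 1) (n k : ℕ) :
    (Nat.choose (n + k) k : ℝ) * s ^ n * t ^ k ≤ 1 := by
  have h := add_pow s t (n + k)
  have hterm : s ^ n * t ^ ((n + k) - n) * ((n + k).choose n : ℝ)
      ≤ ∑ i ∈ Finset.range (n + k + 1), s ^ i * t ^ ((n + k) - i) * ((n + k).choose i : ℝ) := by
    apply Finset.single_le_sum (f := fun i => s ^ i * t ^ ((n + k) - i) * ((n + k).choose i : ℝ))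
    · intro i _
      positivity
    · simp [Nat.lt_succ_iff]
  rw [← h, hst, one_pow] at hterm
  have h1 : (n + k) - n = k := by omega
  have h2 : (n + k).choose n = (n + k).choose k := by
    rw [← Nat.choose_symm (by omega : n ≤ n + k), Nat.add_sub_cancel_left]
  rw [h1, h2] at hterm
  nlinarith

/-- one-dimensional duality `⟨δ_u(f), v⟩ = ⟨f, D_u(v)⟩`. -/
theorem stmt13 (u f v : ℕ → ℝ) (p q r : ℝ) (hp : 0 < p) (hq : 0 < q) (hr : 0 < r)
    (hpqr : 1 / p + 1 / q = 1 / r) (hrp : r < p)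
    (hu : Summable fun n => p ^ n * (u n) ^ 2)
    (hf : Summable fun n => q ^ n * (f n) ^ 2)
    (hv : Summable fun n => (v n) ^ 2 / r ^ n) :
    (∀ n, Summable fun k => |Real.sqrt (Nat.choose (n + k) k) * v (n + k) * u k|) ∧
    Summable (fun n =>
      |(∑ k ∈ Finset.range (n + 1), Real.sqrt (Nat.choose n k) * f k * u (n - k)) * v n|) ∧
    Summable (fun n =>
      |f n * ∑' k, Real.sqrt (Nat.choose (n + k) k) * v (n + k) * u k|) ∧
    ∑' n, (∑ k ∈ Finset.range (n + 1), Real.sqrt (Nat.choose n k) * f k * u (n - k)) * v n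
      = ∑' n, f n * ∑' k, Real.sqrt (Nat.choose (n + k) k) * v (n + k) * u k := by
  have hp' := hp.ne'
  have hq' := hq.ne'
  have hr' := hr.ne'
  set s : ℝ := r / q with hs_def
  set t : ℝ := r / p with ht_def
  have hs0 : 0 < s := by positivity
  have ht0 : 0 < t := by positivity
  have hst : s + t = 1 := by
    rw [hs_def, ht_def]
    have h := congrArg (fun x => r * x) hpqr
    simp only [mul_add] at h
    rw [mul_one_div, mul_one_div, mul_one_div, div_self hr'] at h
    linarith
  clear_value s t
  -- square-summable normalized sequences
  set a : ℕ → ℝ := fun n => Real.sqrt (q ^ n) * |f n| with ha_def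
  set b : ℕ → ℝ := fun n => Real.sqrt (p ^ n) * |u n| with hb_def
  set c : ℕ → ℝ := fun n => |v n| / Real.sqrt (r ^ n) with hc_def
  have ha0 : ∀ n, 0 ≤ a n := fun n => by rw [ha_def]; simp only; positivity
  have hb0 : ∀ n, 0 ≤ b n := fun n => by rw [hb_def]; simp only; positivity
  have hc0 : ∀ n, 0 ≤ c n := fun n => by rw [hc_def]; simp only; positivity
  have ha2 : Summable fun n => a n ^ 2 := by
    refine hf.congr fun n => ?_
    rw [ha_def]
    simp only
    rw [mul_pow, Real.sq_sqrt (by positivity), sq_abs]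
  have hb2 : Summable fun n => b n ^ 2 := by
    refine hu.congr fun n => ?_
    rw [hb_def]
    simp only
    rw [mul_pow, Real.sq_sqrt (by positivity), sq_abs]
  have hc2 : Summable fun n => c n ^ 2 := by
    refine hv.congr fun n => ?_
    rw [hc_def]
    simp only
    rw [div_pow, Real.sq_sqrt (by positivity), sq_abs]
  clear_value a b c
  -- the double-indexed function
  set F : ℕ × ℕ → ℝ := fun x =>
    Real.sqrt (Nat.choose (x.1 + x.2) x.2) * f x.1 * u x.2 * v (x.1 + x.2) with hF_def
  set Y : ℕ × ℕ → ℝ := fun x =>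
    Real.sqrt ((Nat.choose (x.1 + x.2) x.2 : ℝ) * s ^ x.1 * t ^ x.2) * c (x.1 + x.2)
    with hY_def
  clear_value F Y
  have hvv : ∀ m : ℕ, |v m| = c m * Real.sqrt (r ^ m) := by
    intro m
    rw [hc_def]
    simp only
    rw [div_mul_cancel₀]
    positivity
  -- key pointwise identity
  have key : ∀ x : ℕ × ℕ, |F x| = a x.1 * b x.2 * Y x := by
    rintro ⟨j, k⟩
    have h1 : Real.sqrt (q ^ j) * Real.sqrt (p ^ k)
        * Real.sqrt ((Nat.choose (j + k) k : ℝ) * s ^ j * t ^ k)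
        = Real.sqrt (r ^ (j + k)) * Real.sqrt (Nat.choose (j + k) k : ℝ) := by
      rw [← Real.sqrt_mul (by positivity), ← Real.sqrt_mul (by positivity),
        ← Real.sqrt_mul (by positivity)]
      congr 1
      rw [hs_def, ht_def, div_pow, div_pow, pow_add]
      field_simp
    have habs : |F (j, k)|
        = Real.sqrt (Nat.choose (j + k) k : ℝ) * |f j| * |u k| * |v (j + k)| := by
      rw [hF_def]
      simp only [abs_mul, abs_of_nonneg (Real.sqrt_nonneg _)]
    have hY : a j * b k * Y (j, k)
        = (Real.sqrt (q ^ j) * |f j|) * (Real.sqrt (p ^ k) * |u k|)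
          * (Real.sqrt ((Nat.choose (j + k) k : ℝ) * s ^ j * t ^ k) * c (j + k)) := by
      rw [ha_def, hb_def, hY_def]
    rw [habs, hvv (j + k), hY]
    linear_combination (-(|f j| * |u k| * c (j + k))) * h1
  -- summability of Y^2 via antidiagonal decomposition
  have hY2sq : ∀ x : ℕ × ℕ, Y x ^ 2 = (Nat.choose (x.1 + x.2) x.2 : ℝ) * s ^ x.1 * t ^ x.2
      * c (x.1 + x.2) ^ 2 := by
    rintro ⟨j, k⟩
    rw [hY_def]
    simp only
    rw [mul_pow, Real.sq_sqrt (by positivity)]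
  have hY2 : Summable fun x : ℕ × ℕ => Y x ^ 2 := by
    apply (Finset.HasAntidiagonal.sigmaAntidiagonalEquivProd (A := ℕ)).summable_iff.mp
    have hcomp : ((fun x : ℕ × ℕ => Y x ^ 2) ∘ Finset.HasAntidiagonal.sigmaAntidiagonalEquivProd)
        = fun σ : Σ n : ℕ, {x // x ∈ Finset.HasAntidiagonal.antidiagonal n} => Y (σ.2 : ℕ × ℕ) ^ 2 := rfl
    rw [hcomp]
    apply (summable_sigma_of_nonneg fun σ => sq_nonneg _).2
    refine ⟨fun n => Summable.of_finite, ?_⟩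
    apply hc2.congr
    intro n
    rw [Finset.tsum_subtype (Finset.HasAntidiagonal.antidiagonal n) (fun x => Y x ^ 2)]
    have hsum : ∑ x ∈ Finset.HasAntidiagonal.antidiagonal n, Y x ^ 2
        = ∑ x ∈ Finset.HasAntidiagonal.antidiagonal n, (Nat.choose n x.2 : ℝ) * s ^ x.1 * t ^ x.2 * c n ^ 2 := by
      apply Finset.sum_congr rfl
      rintro ⟨j, k⟩ hx
      rw [Finset.HasAntidiagonal.mem_antidiagonal] at hx
      rw [hY2sq (j, k)]
      simp only
      rw [hx]
    rw [hsum, Finset.Nat.sum_antidiagonal_eq_sum_range_succ_mk]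
    have hpow := add_pow s t n
    rw [hst, one_pow] at hpow
    symm
    calc ∑ k ∈ Finset.range (n + 1), (Nat.choose n (n - k) : ℝ) * s ^ k * t ^ (n - k) * c n ^ 2
        = (∑ k ∈ Finset.range (n + 1), s ^ k * t ^ (n - k) * (Nat.choose n k : ℝ)) * c n ^ 2 := by
          rw [Finset.sum_mul]
          apply Finset.sum_congr rfl
          intro k hk
          rw [Finset.mem_range, Nat.lt_succ_iff] at hk
          rw [Nat.choose_symm hk]
          ring
      _ = c n ^ 2 := by rw [← hpow, one_mul]
  have hX2 : Summable fun x : ℕ × ℕ => (a x.1 * b x.2) ^ 2 := by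
    have h := ha2.mul_of_nonneg hb2 (fun n => sq_nonneg _) (fun n => sq_nonneg _)
    exact h.congr fun x => (mul_pow _ _ _).symm
  -- summability of |F|
  have hFabs : Summable fun x : ℕ × ℕ => |F x| := by
    apply Summable.of_nonneg_of_le (fun x => abs_nonneg _)
      (f := fun x => ((a x.1 * b x.2) ^ 2 + Y x ^ 2) / 2)
    · intro x
      rw [key x]
      nlinarith [sq_nonneg (a x.1 * b x.2 - Y x), sq_nonneg (a x.1 * b x.2 + Y x)]
    · exact (hX2.add hY2).div_const 2
  have hF : Summable F := hFabs.of_abs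
  -- Claim 1
  have claim1 : ∀ n, Summable fun k => |Real.sqrt (Nat.choose (n + k) k) * v (n + k) * u k| := by
    intro n
    have hshift : Summable fun k => c (n + k) ^ 2 := by
      refine ((summable_nat_add_iff n).2 hc2).congr fun k => ?_
      rw [add_comm]
    have hM0 : (0:ℝ) ≤ Real.sqrt (r ^ n / s ^ n) := Real.sqrt_nonneg _
    apply Summable.of_nonneg_of_le (fun k => abs_nonneg _)
      (f := fun k => Real.sqrt (r ^ n / s ^ n) * ((b k ^ 2 + c (n + k) ^ 2) / 2))
    · intro k
      have huk : |u k| = b k / Real.sqrt (p ^ k) := by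
        rw [hb_def]
        simp only
        rw [mul_div_cancel_left₀]
        positivity
      have h2 : Real.sqrt ((Nat.choose (n + k) k : ℝ) * r ^ (n + k) / p ^ k)
          = Real.sqrt (Nat.choose (n + k) k : ℝ) * Real.sqrt (r ^ (n + k))
            / Real.sqrt (p ^ k) := by
        rw [Real.sqrt_div (by positivity), Real.sqrt_mul (by positivity)]
      have hCs : (Nat.choose (n + k) k : ℝ) * r ^ (n + k) / p ^ k
          = ((Nat.choose (n + k) k : ℝ) * s ^ n * t ^ k) * (r ^ n / s ^ n) := by
        rw [hs_def, ht_def]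
        field_simp
        rw [div_pow, pow_add, mul_assoc _ (p ^ k), mul_div_assoc', mul_div_cancel_left₀ _ (pow_ne_zero k hp')]
        ring
      have h3 : Real.sqrt ((Nat.choose (n + k) k : ℝ) * r ^ (n + k) / p ^ k)
          ≤ Real.sqrt (r ^ n / s ^ n) := by
        rw [hCs]
        nth_rewrite 2 [show r ^ n / s ^ n = 1 * (r ^ n / s ^ n) by rw [one_mul]]
        apply Real.sqrt_le_sqrt
        exact mul_le_mul_of_nonneg_right (choose_st_le hs0.le ht0.le hst n k) (by positivity)
      have heq : |Real.sqrt (Nat.choose (n + k) k) * v (n + k) * u k|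
          = Real.sqrt ((Nat.choose (n + k) k : ℝ) * r ^ (n + k) / p ^ k)
            * (b k * c (n + k)) := by
        rw [abs_mul, abs_mul, abs_of_nonneg (Real.sqrt_nonneg _), hvv (n + k), huk, h2]
        have hpk : Real.sqrt (p ^ k) ≠ 0 := by positivity
        field_simp
      calc |Real.sqrt (Nat.choose (n + k) k) * v (n + k) * u k|
          = Real.sqrt ((Nat.choose (n + k) k : ℝ) * r ^ (n + k) / p ^ k)
            * (b k * c (n + k)) := heq
        _ ≤ Real.sqrt (r ^ n / s ^ n) * (b k * c (n + k)) :=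
            mul_le_mul_of_nonneg_right h3 (mul_nonneg (hb0 k) (hc0 (n + k)))
        _ ≤ Real.sqrt (r ^ n / s ^ n) * ((b k ^ 2 + c (n + k) ^ 2) / 2) := by
            apply mul_le_mul_of_nonneg_left _ hM0
            nlinarith [sq_nonneg (b k - c (n + k))]
    · exact ((hb2.add hshift).div_const 2).mul_left _
  -- the finite sum on the left equals the antidiagonal sum of F
  have LHSeq : ∀ n, (∑ k ∈ Finset.range (n + 1), Real.sqrt (Nat.choose n k) * f k * u (n - k))
      * v n = ∑ x ∈ Finset.HasAntidiagonal.antidiagonal n, F x := by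
    intro n
    rw [Finset.Nat.sum_antidiagonal_eq_sum_range_succ_mk, Finset.sum_mul]
    apply Finset.sum_congr rfl
    intro k hk
    rw [Finset.mem_range, Nat.lt_succ_iff] at hk
    show Real.sqrt (Nat.choose n k) * f k * u (n - k) * v n = F (k, n - k)
    rw [hF_def]
    simp only
    rw [Nat.add_sub_cancel' hk, Nat.choose_symm hk]
  -- summability of the antidiagonal sums of |F|
  have hsig : Summable fun n => ∑ x ∈ Finset.HasAntidiagonal.antidiagonal n, |F x| := by
    have h := (Finset.HasAntidiagonal.sigmaAntidiagonalEquivProd (A := ℕ)).summable_iff.2 hFabs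
    have hcomp : ((fun x : ℕ × ℕ => |F x|) ∘ Finset.HasAntidiagonal.sigmaAntidiagonalEquivProd)
        = fun σ : Σ n : ℕ, {x // x ∈ Finset.HasAntidiagonal.antidiagonal n} => |F (σ.2 : ℕ × ℕ)| := rfl
    rw [hcomp] at h
    have h2 := ((summable_sigma_of_nonneg fun σ => abs_nonneg _).1 h).2
    refine h2.congr fun n => ?_
    exact Finset.tsum_subtype (Finset.HasAntidiagonal.antidiagonal n) (fun x => |F x|)
  -- Claim 2
  have claim2 : Summable (fun n =>
      |(∑ k ∈ Finset.range (n + 1), Real.sqrt (Nat.choose n k) * f k * u (n - k)) * v n|) := by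
    apply Summable.of_nonneg_of_le (fun n => abs_nonneg _) _ hsig
    intro n
    rw [LHSeq n]
    exact Finset.abs_sum_le_sum_abs _ _
  -- rewrite the right-hand inner sum
  have hFn : ∀ n, f n * ∑' k, Real.sqrt (Nat.choose (n + k) k) * v (n + k) * u k
      = ∑' k, F (n, k) := by
    intro n
    rw [← tsum_mul_left]
    apply tsum_congr
    intro k
    rw [hF_def]
    simp only
    ring
  -- Claim 3
  have claim3 : Summable (fun n =>
      |f n * ∑' k, Real.sqrt (Nat.choose (n + k) k) * v (n + k) * u k|) := by
    apply Summable.of_nonneg_of_le (fun n => abs_nonneg _) _ hFabs.prod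
    intro n
    rw [hFn n]
    have := norm_tsum_le_tsum_norm (f := fun k => F (n, k)) (hFabs.prod_factor n)
    simpa [Real.norm_eq_abs] using this
  refine ⟨claim1, claim2, claim3, ?_⟩
  -- the equality
  have hFe : Summable (fun σ : Σ n : ℕ, {x // x ∈ Finset.HasAntidiagonal.antidiagonal n} => F (σ.2 : ℕ × ℕ)) := by
    have h := (Finset.HasAntidiagonal.sigmaAntidiagonalEquivProd (A := ℕ)).summable_iff.2 hF
    exact h
  calc ∑' n, (∑ k ∈ Finset.range (n + 1), Real.sqrt (Nat.choose n k) * f k * u (n - k)) * v n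
      = ∑' n, ∑ x ∈ Finset.HasAntidiagonal.antidiagonal n, F x := tsum_congr LHSeq
    _ = ∑' n, ∑' (x : Finset.HasAntidiagonal.antidiagonal n), F (x : ℕ × ℕ) :=
        tsum_congr fun n => (Finset.tsum_subtype (Finset.HasAntidiagonal.antidiagonal n) F).symm
    _ = ∑' σ : Σ n : ℕ, {x // x ∈ Finset.HasAntidiagonal.antidiagonal n}, F (σ.2 : ℕ × ℕ) :=
        (Summable.tsum_sigma hFe).symm
    _ = ∑' x : ℕ × ℕ, F x := (Finset.HasAntidiagonal.sigmaAntidiagonalEquivProd (A := ℕ)).tsum_eq F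
    _ = ∑' n, ∑' k, F (n, k) := Summable.tsum_prod hF
    _ = ∑' n, f n * ∑' k, Real.sqrt (Nat.choose (n + k) k) * v (n + k) * u k :=
        tsum_congr fun n => (hFn n).symm
end
end

section
/- Let n ≥ 1, let q_1,...,q_n be positive numbers, r = min(q_1,...,q_n), and let ρ > 0, ℓ ≥ ρ. Then for every family (f_α) in a Hilbert space X indexed by multi-indices supported in {1,...,n}, ∑_α q^{2α}‖f_α‖² < ∞ implies ∑_α (α!)^{−ρ}(2ℕ)^{−2ℓα}‖f_α‖² < ∞; i.e., L_{2,q}(X) ⊂ (S)_{−ρ,−ℓ}(X) when the index space is finite-dimensional. -/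
open scoped BigOperators

noncomputable section

lemma aux_choose_le (n k : ℕ) : n.choose k ≤ 2 ^ n := by
  rcases le_or_gt k n with h | h
  · calc n.choose k ≤ ∑ m ∈ Finset.range (n+1), n.choose m :=
        Finset.single_le_sum (f := fun m => n.choose m) (fun _ _ => Nat.zero_le _)
          (Finset.mem_range.mpr (Nat.lt_succ_of_le h))
      _ = 2 ^ n := Nat.sum_range_choose n
  · simp [Nat.choose_eq_zero_of_lt h]

lemma aux_fact_add (a b : ℕ) : (a + b).factorial ≤ 2 ^ (a + b) * (a.factorial * b.factorial) := by
  have h := Nat.add_choose_mul_factorial_mul_factorial a b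
  calc (a + b).factorial = (a+b).choose b * a.factorial * b.factorial := h.symm
    _ ≤ 2 ^ (a+b) * a.factorial * b.factorial := by
        exact Nat.mul_le_mul_right _ (Nat.mul_le_mul_right _ (aux_choose_le _ _))
    _ = 2 ^ (a + b) * (a.factorial * b.factorial) := by ring

lemma aux_multinom (N : ℕ) (α : Fin N → ℕ) :
    (∑ k, α k).factorial ≤ 2 ^ (N * ∑ k, α k) * ∏ k, (α k).factorial := by
  induction N with
  | zero => simp
  | succ N ih =>
    rw [Fin.sum_univ_succ, Fin.prod_univ_succ]
    set a := α 0
    set T := ∑ k : Fin N, α (Fin.succ k) with hT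
    calc (a + T).factorial ≤ 2 ^ (a + T) * (a.factorial * T.factorial) := aux_fact_add a T
      _ ≤ 2 ^ (a + T) * (a.factorial * (2 ^ (N * T) * ∏ k : Fin N, (α (Fin.succ k)).factorial)) := by
          exact Nat.mul_le_mul_left _ (Nat.mul_le_mul_left _ (ih fun k => α (Fin.succ k)))
      _ = 2 ^ (a + T + N * T) * (a.factorial * ∏ k : Fin N, (α (Fin.succ k)).factorial) := by
          ring
      _ ≤ 2 ^ ((N + 1) * (a + T)) * (a.factorial * ∏ k : Fin N, (α (Fin.succ k)).factorial) := by
          apply Nat.mul_le_mul_right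
          apply Nat.pow_le_pow_right (by norm_num)
          nlinarith [Nat.zero_le a, Nat.zero_le T]

lemma aux_expbound (x ρ : ℝ) (hx : 0 < x) (hρ : 0 < ρ) :
    ∃ C > 0, ∀ m : ℕ, x ^ m ≤ C * (m.factorial : ℝ) ^ ρ := by
  set y := x ^ (1/ρ) with hy
  have hy0 : 0 < y := Real.rpow_pos_of_pos hx _
  refine ⟨(Real.exp y) ^ ρ, Real.rpow_pos_of_pos (Real.exp_pos y) _, fun m => ?_⟩
  have h1 : y ^ m ≤ Real.exp y * m.factorial := by
    have h2 : y ^ m / m.factorial ≤ Real.exp y := by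
      calc y ^ m / m.factorial ≤ ∑ i ∈ Finset.range (m+1), y ^ i / i.factorial := by
            exact Finset.single_le_sum (f := fun i => y ^ i / (i.factorial:ℝ))
              (fun i _ => by positivity) (Finset.mem_range.mpr (Nat.lt_succ_self m))
        _ ≤ Real.exp y := Real.sum_le_exp_of_nonneg hy0.le _
    have hfpos : (0:ℝ) < m.factorial := by exact_mod_cast m.factorial_pos
    calc y ^ m = y ^ m / m.factorial * m.factorial := by field_simp
      _ ≤ Real.exp y * m.factorial := by
          exact mul_le_mul_of_nonneg_right h2 hfpos.le
  have hxm : x ^ m = (y ^ m) ^ ρ := by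
    rw [← Real.rpow_natCast y m, ← Real.rpow_natCast x m, hy,
      ← Real.rpow_mul hx.le, ← Real.rpow_mul hx.le]
    congr 1
    field_simp
  rw [hxm]
  calc (y ^ m) ^ ρ ≤ (Real.exp y * m.factorial) ^ ρ :=
        Real.rpow_le_rpow (by positivity) h1 hρ.le
    _ = (Real.exp y) ^ ρ * (m.factorial : ℝ) ^ ρ :=
        Real.mul_rpow (Real.exp_pos y).le (by positivity)
open scoped BigOperators


set_option maxHeartbeats 1000000 in
/-- in the finite-dimensional case, `L_{2,q}(X) ⊂ (S)_{-ρ,-ℓ}(X)`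
for every `ρ > 0`, `ℓ ≥ ρ`, and every (finite) sequence `q` of positive weights,
with `r = min(q_1,…,q_n)`. -/
theorem stmt16 {X : Type*} [NormedAddCommGroup X] (n : ℕ) (q : Fin (n + 1) → ℝ)
    (hq : ∀ k, 0 < q k) (r ρ ℓ : ℝ)
    (hrdef : r = Finset.univ.inf' Finset.univ_nonempty q)
    (hρ : 0 < ρ) (hℓ : ρ ≤ ℓ)
    (f : (Fin (n + 1) → ℕ) → X)
    (hf : Summable fun α : Fin (n + 1) → ℕ => (∏ k, q k ^ (2 * α k)) * ‖f α‖ ^ 2) :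
    Summable fun α : Fin (n + 1) → ℕ =>
      ((∏ k, ((α k).factorial : ℝ)) ^ (-ρ)) *
        (∏ k : Fin (n + 1), ((2 * ((k : ℕ) + 1) : ℝ)) ^ (-(2 * ℓ) * (α k : ℝ))) * ‖f α‖ ^ 2 := by
  obtain ⟨i0, -, hri⟩ := Finset.exists_mem_eq_inf' (Finset.univ_nonempty) q
  have hr0 : 0 < r := by rw [hrdef, hri]; exact hq i0
  have hrle : ∀ k, r ≤ q k := fun k => by
    rw [hrdef]; exact Finset.inf'_le q (Finset.mem_univ k)
  obtain ⟨C, hC0, hC⟩ := aux_expbound (((2:ℝ) ^ (n+1)) ^ ρ / r ^ 2) ρ (by positivity) hρ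
  refine Summable.of_nonneg_of_le ?_ ?_ (hf.mul_left C)
  · intro α
    have hF : (0:ℝ) < ∏ k, ((α k).factorial : ℝ) := by
      apply Finset.prod_pos; intro k _; exact_mod_cast (α k).factorial_pos
    have hP : (0:ℝ) ≤ ∏ k : Fin (n+1), ((2 * ((k : ℕ) + 1) : ℝ)) ^ (-(2 * ℓ) * (α k : ℝ)) := by
      apply Finset.prod_nonneg; intro k _
      exact Real.rpow_nonneg (by positivity) _
    have := Real.rpow_nonneg hF.le (-ρ)
    positivity
  · intro α
    set m := ∑ k, α k with hm
    set F := ∏ k, ((α k).factorial : ℝ) with hF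
    have hF1 : (1:ℝ) ≤ F := by
      rw [hF]
      calc (1:ℝ) = ∏ _k : Fin (n+1), (1:ℝ) := by simp
        _ ≤ ∏ k, ((α k).factorial : ℝ) := by
            apply Finset.prod_le_prod (fun k _ => zero_le_one) (fun k _ => ?_)
            exact_mod_cast (α k).factorial_pos
    have hF0 : (0:ℝ) < F := lt_of_lt_of_le one_pos hF1
    have hFρ : (0:ℝ) < F ^ ρ := Real.rpow_pos_of_pos hF0 _
    -- P ≤ 1
    have hP1 : (∏ k : Fin (n+1), ((2 * ((k : ℕ) + 1) : ℝ)) ^ (-(2 * ℓ) * (α k : ℝ))) ≤ 1 := by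
      apply Finset.prod_le_one
      · intro k _; exact Real.rpow_nonneg (by positivity) _
      · intro k _
        apply Real.rpow_le_one_of_one_le_of_nonpos
        · have : (1:ℝ) ≤ (k:ℕ) + 1 := by exact_mod_cast Nat.succ_le_succ (Nat.zero_le _)
          nlinarith
        · apply mul_nonpos_of_nonpos_of_nonneg
          · nlinarith
          · exact_mod_cast Nat.zero_le _
    have hP0 : (0:ℝ) ≤ ∏ k : Fin (n+1), ((2 * ((k : ℕ) + 1) : ℝ)) ^ (-(2 * ℓ) * (α k : ℝ)) :=
      Finset.prod_nonneg fun k _ => Real.rpow_nonneg (by positivity) _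
    -- key: F ^ (-ρ) ≤ C * r ^ (2 * m)
    have hr2m : (0:ℝ) < r ^ (2 * m) := by positivity
    set A : ℝ := ((2:ℝ) ^ ((n+1) * m)) ^ ρ with hA
    have hA0 : (0:ℝ) < A := Real.rpow_pos_of_pos (by positivity) _
    have hfact : ((m.factorial : ℝ)) ^ ρ ≤ A * F ^ ρ := by
      rw [hA, ← Real.mul_rpow (by positivity) hF0.le]
      apply Real.rpow_le_rpow (by positivity) _ hρ.le
      have h := aux_multinom (n+1) α
      calc ((m.factorial : ℝ)) ≤ ((2 ^ ((n+1) * m) * ∏ k, (α k).factorial : ℕ) : ℝ) := by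
            exact_mod_cast h
        _ = (2:ℝ) ^ ((n+1) * m) * F := by push_cast [hF]; ring
    have hx_eq : (((2:ℝ) ^ (n+1)) ^ ρ / r ^ 2) ^ m = A / r ^ (2 * m) := by
      rw [div_pow, ← pow_mul]
      congr 1
      rw [hA, ← Real.rpow_natCast (((2:ℝ) ^ (n+1)) ^ ρ) m, ← Real.rpow_mul (by positivity),
        mul_comm ρ (m:ℝ), Real.rpow_mul (by positivity : (0:ℝ) ≤ (2:ℝ)^(n+1)),
        Real.rpow_natCast, ← pow_mul]
    have hstep : A / r ^ (2 * m) ≤ C * (A * F ^ ρ) := by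
      calc A / r ^ (2 * m) = (((2:ℝ) ^ (n+1)) ^ ρ / r ^ 2) ^ m := hx_eq.symm
        _ ≤ C * (m.factorial : ℝ) ^ ρ := hC m
        _ ≤ C * (A * F ^ ρ) := by exact mul_le_mul_of_nonneg_left hfact hC0.le
    have h2 : 1 ≤ C * r ^ (2 * m) * F ^ ρ := by
      have h3 : A ≤ C * (A * F ^ ρ) * r ^ (2 * m) := (div_le_iff₀ hr2m).mp hstep
      nlinarith [mul_pos (mul_pos hC0 hr2m) hFρ, hA0]
    have hkey : F ^ (-ρ) ≤ C * r ^ (2 * m) := by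
      rw [Real.rpow_neg hF0.le]
      rw [inv_le_iff_one_le_mul₀ hFρ]
      calc 1 ≤ C * r ^ (2 * m) * F ^ ρ := h2
        _ = C * r ^ (2 * m) * F ^ ρ := rfl
    -- r ^ (2m) ≤ ∏ q ^ (2 α)
    have hprodq : r ^ (2 * m) ≤ ∏ k, q k ^ (2 * α k) := by
      calc r ^ (2 * m) = ∏ k, r ^ (2 * α k) := by
            rw [Finset.prod_pow_eq_pow_sum, hm, Finset.mul_sum]
        _ ≤ ∏ k, q k ^ (2 * α k) := by
            apply Finset.prod_le_prod
            · intro k _; positivity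
            · intro k _; exact pow_le_pow_left₀ hr0.le (hrle k) _
    have hw : F ^ (-ρ) * (∏ k : Fin (n+1), ((2 * ((k : ℕ) + 1) : ℝ)) ^ (-(2 * ℓ) * (α k : ℝ)))
        ≤ C * ∏ k, q k ^ (2 * α k) := by
      calc F ^ (-ρ) * _ ≤ F ^ (-ρ) * 1 :=
            mul_le_mul_of_nonneg_left hP1 (Real.rpow_nonneg hF0.le _)
        _ = F ^ (-ρ) := mul_one _
        _ ≤ C * r ^ (2 * m) := hkey
        _ ≤ C * ∏ k, q k ^ (2 * α k) := mul_le_mul_of_nonneg_left hprodq hC0.le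
    calc F ^ (-ρ) * (∏ k : Fin (n+1), ((2 * ((k : ℕ) + 1) : ℝ)) ^ (-(2 * ℓ) * (α k : ℝ))) * ‖f α‖ ^ 2
        ≤ (C * ∏ k, q k ^ (2 * α k)) * ‖f α‖ ^ 2 :=
          mul_le_mul_of_nonneg_right hw (by positivity)
      _ = C * ((∏ k, q k ^ (2 * α k)) * ‖f α‖ ^ 2) := by ring
end
end
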